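/- arXiv:1403.6783 — 9 statements merged into one kernel-verified Lean document; each statement's English description precedes it below -/
import Mathlib

section
/- Let A, B : ℝ² → ℝ and C : ℝ → ℝ be smooth functions with the following property: for every smooth function f : ℝ² → ℝ (of variables (y,u)) there exists a smooth function G : ℝ² → ℝ (of variables (y,u)) such that, identically in (x, y, u) ∈ ℝ³: (i) A_{yy}(x,y) = 0; (ii) B_{yy}(x,y) − 2·A_{xy}(x,y) = 0; (iii) 2·B_{xy}(x,y) − A_{xx}(x,y) − 3·f(y,u)·A_y(x,y) = 0; (iv) B_{xx}(x,y) − C(u)·f_u(y,u) − B(x,y)·f_y(y,u) − G(y,u) + f(y,u)·B_y(x,y) − 2·f(y,u)·A_x(x,y) = 0. Then there exist real constants α, β, γ, δ such that A(x,y) = α·x + β and B(x,y) = γ + δ·y for all (x,y). -/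
/-- Partial derivative in the first variable. -/
noncomputable def pd1 (f : ℝ → ℝ → ℝ) : ℝ → ℝ → ℝ := fun y u => deriv (fun s => f s u) y

/-- Partial derivative in the second variable. -/
noncomputable def pd2 (f : ℝ → ℝ → ℝ) : ℝ → ℝ → ℝ := fun y u => deriv (f y) u

lemma pd1_eval (f : ℝ → ℝ → ℝ) (x y : ℝ) : pd1 f x y = deriv (fun s => f s y) x := rfl

lemma pd2_eval (f : ℝ → ℝ → ℝ) (x y : ℝ) : pd2 f x y = deriv (fun t => f x t) y := rfl

/-- one-variable affine conclusion from vanishing second derivative -/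
lemma affine_of_deriv2 (a : ℝ → ℝ) (ha : ContDiff ℝ (⊤ : ℕ∞) a)
    (h2 : ∀ x, deriv (deriv a) x = 0) :
    ∀ x, a x = a 0 + deriv a 0 * x := by
  have ha' : Differentiable ℝ a ∧ ContDiff ℝ (⊤ : ℕ∞) (deriv a) := by
    have := contDiff_infty_iff_deriv.mp (by exact_mod_cast ha)
    exact ⟨this.1, by exact_mod_cast this.2⟩
  have hda : Differentiable ℝ (deriv a) := ha'.2.differentiable (by simp)
  have hconst : ∀ x, deriv a x = deriv a 0 := fun x =>
    is_const_of_deriv_eq_zero hda h2 x 0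
  intro x
  have hg : Differentiable ℝ (fun x => a x - deriv a 0 * x) :=
    ha'.1.sub ((differentiable_const _).mul differentiable_id)
  have hg' : ∀ x, deriv (fun x => a x - deriv a 0 * x) x = 0 := by
    intro x
    have hd : HasDerivAt (fun x => a x - deriv a 0 * x) (deriv a x - deriv a 0) x := by
      have := (ha'.1 x).hasDerivAt.sub ((hasDerivAt_id x).const_mul (deriv a 0))
      rwa [mul_one] at this
    rw [hd.deriv, hconst x, sub_self]
  have := is_const_of_deriv_eq_zero hg hg' x 0
  simp at this
  linarith [this]

/-- If smooth `A(x,y)`, `B(x,y)` and `C(u)` are such that for every smooth `f(y,u)` there is a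
smooth `G(y,u)` with
`A_yy = 0`, `B_yy − 2A_xy = 0`, `2B_xy − A_xx − 3fA_y = 0`, and
`B_xx − C f_u − B f_y − G + f B_y − 2 f A_x = 0` identically in `(x,y,u)`,
then `A(x,y) = αx + β` and `B(x,y) = γ + δy` for some constants `α, β, γ, δ`. -/
theorem feedback_preserving_fields_are_affine
    (A B : ℝ → ℝ → ℝ) (C : ℝ → ℝ)
    (hA : ContDiff ℝ (⊤ : ℕ∞) fun p : ℝ × ℝ => A p.1 p.2)
    (hB : ContDiff ℝ (⊤ : ℕ∞) fun p : ℝ × ℝ => B p.1 p.2)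
    (hC : ContDiff ℝ (⊤ : ℕ∞) C)
    (h : ∀ f : ℝ → ℝ → ℝ, (ContDiff ℝ (⊤ : ℕ∞) fun p : ℝ × ℝ => f p.1 p.2) →
      ∃ G : ℝ → ℝ → ℝ, (ContDiff ℝ (⊤ : ℕ∞) fun p : ℝ × ℝ => G p.1 p.2) ∧
        ∀ x y u : ℝ,
          pd2 (pd2 A) x y = 0 ∧
          pd2 (pd2 B) x y - 2 * pd2 (pd1 A) x y = 0 ∧
          2 * pd2 (pd1 B) x y - pd1 (pd1 A) x y - 3 * f y u * pd2 A x y = 0 ∧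
          pd1 (pd1 B) x y - C u * pd2 f y u - B x y * pd1 f y u - G y u
            + f y u * pd2 B x y - 2 * f y u * pd1 A x y = 0) :
    ∃ α β γ δ : ℝ, ∀ x y : ℝ, A x y = α * x + β ∧ B x y = γ + δ * y := by
  -- f₁ (y,u) = u
  obtain ⟨G₁, hG₁, H₁⟩ := h (fun _ u => u) (contDiff_snd)
  -- f₂ (y,u) = y
  obtain ⟨G₂, hG₂, H₂⟩ := h (fun y _ => y) (contDiff_fst)
  -- pd derivatives of f₁, f₂
  have pd1f₁ : ∀ y u : ℝ, pd1 (fun _ u => u) y u = 0 := by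
    intro y u; simp [pd1]
  have pd2f₁ : ∀ y u : ℝ, pd2 (fun _ u => u) y u = 1 := by
    intro y u; simp [pd2]
  have pd1f₂ : ∀ y u : ℝ, pd1 (fun y _ => y) y u = 1 := by
    intro y u; simp [pd1]
  have pd2f₂ : ∀ y u : ℝ, pd2 (fun y _ => y) y u = 0 := by
    intro y u; simp [pd2]
  -- Step 1 : pd2 A = 0
  have hAy0 : ∀ x y : ℝ, pd2 A x y = 0 := by
    intro x y
    have h0 := (H₁ x y 0).2.2.1
    have h1 := (H₁ x y 1).2.2.1
    linarith
  -- Step 2 : A x y = A x 0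
  have hAconst : ∀ x y : ℝ, A x y = A x 0 := by
    intro x y
    have hdiff : Differentiable ℝ (A x) := by
      have : ContDiff ℝ (⊤ : ℕ∞) (fun t : ℝ => A x t) :=
        hA.comp ((contDiff_const (c := x)).prodMk contDiff_id)
      exact this.differentiable (by simp)
    exact is_const_of_deriv_eq_zero hdiff (fun t => hAy0 x t) y 0
  -- Step 3 : pd1 A x y = pd1 A x 0
  have hAxconst : ∀ x y : ℝ, pd1 A x y = pd1 A x 0 := by
    intro x y
    have : (fun s => A s y) = (fun s => A s 0) := funext fun s => hAconst s y
    simp [pd1, this]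
  -- Step 4 : pd2 (pd1 A) = 0
  have hpd2pd1A : ∀ x y : ℝ, pd2 (pd1 A) x y = 0 := by
    intro x y
    have : (fun t => pd1 A x t) = (fun _ => pd1 A x 0) := funext fun t => hAxconst x t
    rw [pd2_eval, this, deriv_const]
  -- Step 5 : pd2 (pd2 B) = 0
  have hByy : ∀ x y : ℝ, pd2 (pd2 B) x y = 0 := by
    intro x y
    have := (H₁ x y 0).2.1
    rw [hpd2pd1A x y] at this
    linarith
  -- Step 6 : indep-of-x facts from f₁ equation
  have hBxx : ∀ x y : ℝ, pd1 (pd1 B) x y = C 0 + G₁ y 0 := by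
    intro x y
    have h4 := (H₁ x y 0).2.2.2
    rw [pd1f₁ y 0, pd2f₁ y 0] at h4
    simp at h4
    linarith
  have hBy2Ax : ∀ x y : ℝ, pd2 B x y - 2 * pd1 A x y = C 1 + G₁ y 1 - (C 0 + G₁ y 0) := by
    intro x y
    have h4 := (H₁ x y 1).2.2.2
    rw [pd1f₁ y 1, pd2f₁ y 1, hBxx x y] at h4
    simp at h4
    linarith
  -- Step 7 : B is independent of x
  have hBconst : ∀ x y : ℝ, B x y = B 0 y := by
    intro x y
    have h4 := (H₂ x y 0).2.2.2
    have h4' := (H₂ 0 y 0).2.2.2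
    rw [pd1f₂ y 0, pd2f₂ y 0] at h4 h4'
    rw [hBxx x y] at h4
    rw [hBxx 0 y] at h4'
    have e1 : y * (pd2 B x y - 2 * pd1 A x y) = y * (pd2 B 0 y - 2 * pd1 A 0 y) := by
      rw [hBy2Ax x y, hBy2Ax 0 y]
    have e1' : y * pd2 B x y - 2 * y * pd1 A x y = y * pd2 B 0 y - 2 * y * pd1 A 0 y := by
      nlinarith [e1]
    linarith
  -- Step 8 : pd1 B = 0
  have hBx0 : ∀ x y : ℝ, pd1 B x y = 0 := by
    intro x y
    have : (fun s => B s y) = (fun _ => B 0 y) := funext fun s => hBconst s y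
    rw [pd1_eval, this, deriv_const]
  -- Step 9 : pd2 (pd1 B) = 0
  have hpd2pd1B : ∀ x y : ℝ, pd2 (pd1 B) x y = 0 := by
    intro x y
    have : (fun t => pd1 B x t) = (fun _ : ℝ => (0:ℝ)) := funext fun t => hBx0 x t
    rw [pd2_eval, this, deriv_const]
  -- Step 10 : pd1 (pd1 A) = 0
  have hAxx : ∀ x y : ℝ, pd1 (pd1 A) x y = 0 := by
    intro x y
    have h3 := (H₁ x y 0).2.2.1
    rw [hpd2pd1B x y, hAy0 x y] at h3
    simp at h3
    linarith
  -- conclude for a := fun x => A x 0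
  set a : ℝ → ℝ := fun x => A x 0 with ha_def
  have ha : ContDiff ℝ (⊤ : ℕ∞) a :=
    hA.comp (contDiff_id.prodMk (contDiff_const (c := (0:ℝ))))
  have ha2 : ∀ x, deriv (deriv a) x = 0 := by
    intro x
    have : deriv a = fun s => pd1 A s 0 := rfl
    rw [this]
    exact hAxx x 0
  have haff := affine_of_deriv2 a ha ha2
  -- conclude for b := fun y => B 0 y
  set b : ℝ → ℝ := fun y => B 0 y with hb_def
  have hb : ContDiff ℝ (⊤ : ℕ∞) b :=
    hB.comp ((contDiff_const (c := (0:ℝ))).prodMk contDiff_id)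
  have hb2 : ∀ y, deriv (deriv b) y = 0 := by
    intro y
    have : deriv b = fun t => pd2 B 0 t := rfl
    rw [this]
    exact hByy 0 y
  have hbff := affine_of_deriv2 b hb hb2
  refine ⟨deriv a 0, a 0, b 0, deriv b 0, fun x y => ⟨?_, ?_⟩⟩
  · rw [hAconst x y]
    have := haff x
    simpa [mul_comm] using this.trans (by ring)
  · rw [hBconst x y]
    have := hbff y
    linarith
end

section
/- Let f : V → ℝ be smooth on an open set V ⊆ ℝ², let a ≠ 0, b, λ ≠ 0 be real constants, and let U : ℝ → ℝ be smooth with U'(u) ≠ 0 for all u. Define T(y,u) = (a·y + b, U(u)) and f̃(y,u) = λ·f(T(y,u)) on T⁻¹(V). Then at every point (y,u) with f_y(T(y,u)) ≠ 0 and f_u(T(y,u)) ≠ 0 one has J32(f̃)(y,u) = J32(f)(T(y,u)), i.e. f̃²·f̃_{yyu}/(f̃_y²·f̃_u) = (f²·f_{yyu}/(f_y²·f_u)) ∘ T. -/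
/-- Second-order differential invariant `J21 = f·f_yy / f_y²`. -/
noncomputable def J21 (f : ℝ → ℝ → ℝ) : ℝ → ℝ → ℝ := fun y u =>
  f y u * pd1 (pd1 f) y u / (pd1 f y u) ^ 2

/-- Second-order differential invariant `J22 = f·f_yu / (f_y·f_u)`. -/
noncomputable def J22 (f : ℝ → ℝ → ℝ) : ℝ → ℝ → ℝ := fun y u =>
  f y u * pd2 (pd1 f) y u / (pd1 f y u * pd2 f y u)

/-- Third-order differential invariant `J31 = f²·f_yyy / f_y³`. -/
noncomputable def J31 (f : ℝ → ℝ → ℝ) : ℝ → ℝ → ℝ := fun y u =>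
  f y u ^ 2 * pd1 (pd1 (pd1 f)) y u / (pd1 f y u) ^ 3

/-- Third-order differential invariant `J32 = f²·f_yyu / (f_y²·f_u)`. -/
noncomputable def J32 (f : ℝ → ℝ → ℝ) : ℝ → ℝ → ℝ := fun y u =>
  f y u ^ 2 * pd2 (pd1 (pd1 f)) y u / ((pd1 f y u) ^ 2 * pd2 f y u)

/-- Third-order differential invariant `J33 = f²·f_yuu/(f_u²·f_y) − J22·f·f_uu/f_u²`. -/
noncomputable def J33 (f : ℝ → ℝ → ℝ) : ℝ → ℝ → ℝ := fun y u =>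
  f y u ^ 2 * pd2 (pd2 (pd1 f)) y u / ((pd2 f y u) ^ 2 * pd1 f y u)
    - J22 f y u * (f y u * pd2 (pd2 f) y u / (pd2 f y u) ^ 2)

/-- Fourth-order differential invariant `J41 = f³·f_yyyy / f_y⁴`. -/
noncomputable def J41 (f : ℝ → ℝ → ℝ) : ℝ → ℝ → ℝ := fun y u =>
  f y u ^ 3 * pd1 (pd1 (pd1 (pd1 f))) y u / (pd1 f y u) ^ 4

/-- Fourth-order differential invariant
`J44 = f³·f_yuuu/(f_y·f_u³) − 3·J33·f·f_uu/f_u² − J22·f²·f_uuu/f_u³`. -/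
noncomputable def J44 (f : ℝ → ℝ → ℝ) : ℝ → ℝ → ℝ := fun y u =>
  f y u ^ 3 * pd2 (pd2 (pd2 (pd1 f))) y u / (pd1 f y u * (pd2 f y u) ^ 3)
    - 3 * J33 f y u * (f y u * pd2 (pd2 f) y u / (pd2 f y u) ^ 2)
    - J22 f y u * (f y u ^ 2 * pd2 (pd2 (pd2 f)) y u / (pd2 f y u) ^ 3)

/-- The invariant derivation `∇₁ = (f/f_y)·∂/∂y` applied to `g`. -/
noncomputable def nab1 (f g : ℝ → ℝ → ℝ) : ℝ → ℝ → ℝ := fun y u =>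
  f y u / pd1 f y u * pd1 g y u

/-- The invariant derivation `∇₂ = (f/f_u)·∂/∂u` applied to `g`. -/
noncomputable def nab2 (f g : ℝ → ℝ → ℝ) : ℝ → ℝ → ℝ := fun y u =>
  f y u / pd2 f y u * pd2 g y u

/-- deriv of `t ↦ c * h (a*t+b)` equals `c*a*h'(a*s+b)` unconditionally when `a ≠ 0, c ≠ 0`. -/
lemma deriv_affine_mul (h : ℝ → ℝ) (c a b : ℝ) (ha : a ≠ 0) (hc : c ≠ 0) (s : ℝ) :
    deriv (fun t => c * h (a * t + b)) s = c * a * deriv h (a * s + b) := by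
  by_cases hd : DifferentiableAt ℝ h (a * s + b)
  · have h1 : HasDerivAt (fun t : ℝ => a * t + b) a s := by
      simpa using ((hasDerivAt_id s).const_mul a).add_const b
    have h2 : HasDerivAt (fun t => c * h (a * t + b)) (c * (deriv h (a * s + b) * a)) s :=
      (hd.hasDerivAt.comp s h1).const_mul c
    rw [h2.deriv]; ring
  · have hnd : ¬ DifferentiableAt ℝ (fun t => c * h (a * t + b)) s := by
      intro hD
      apply hd
      have key : h = fun x => c⁻¹ * ((fun t => c * h (a * t + b)) ((x - b) / a)) := by
        funext x
        field_simp
        rw [sub_add_cancel]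
      rw [key]
      have h3 : DifferentiableAt ℝ (fun x : ℝ => (x - b) / a) (a * s + b) := by fun_prop
      have h4 : (a * s + b - b) / a = s := by field_simp; ring
      have hD' : DifferentiableAt ℝ (fun t => c * h (a * t + b)) ((a * s + b - b) / a) := by
        rw [h4]; exact hD
      exact (hD'.comp (a * s + b) h3).const_mul c⁻¹
    rw [deriv_zero_of_not_differentiableAt hd, deriv_zero_of_not_differentiableAt hnd]
    ring

/-- Invariance of `J32` under the feedback substitution `T(y,u) = (a·y + b, U(u))`,
`f̃ = λ·(f ∘ T)`, where `U' ≠ 0` everywhere: at every point with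
`f_y(T(y,u)) ≠ 0` and `f_u(T(y,u)) ≠ 0`, `J32(f̃)(y,u) = J32(f)(T(y,u))`. -/
theorem J32_invariant (V : Set (ℝ × ℝ)) (hV : IsOpen V) (f : ℝ → ℝ → ℝ)
    (hf : ContDiffOn ℝ (⊤ : ℕ∞) (fun p : ℝ × ℝ => f p.1 p.2) V)
    (a b l : ℝ) (ha : a ≠ 0) (hl : l ≠ 0)
    (U : ℝ → ℝ) (hU : ContDiff ℝ (⊤ : ℕ∞) U) (hU' : ∀ v : ℝ, deriv U v ≠ 0)
    (y u : ℝ) (hmem : (a * y + b, U u) ∈ V)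
    (hfy : pd1 f (a * y + b) (U u) ≠ 0) (hfu : pd2 f (a * y + b) (U u) ≠ 0) :
    J32 (fun s v => l * f (a * s + b) (U v)) y u = J32 f (a * y + b) (U u) := by
  set g : ℝ × ℝ → ℝ := fun p => f p.1 p.2 with hg
  set G1 : ℝ × ℝ → ℝ := fun p => fderiv ℝ g p (1, 0) with hG1def
  set G2 : ℝ × ℝ → ℝ := fun p => fderiv ℝ G1 p (1, 0) with hG2def
  have htop : ((⊤ : ℕ∞) : WithTop ℕ∞) + 1 ≤ ((⊤ : ℕ∞) : WithTop ℕ∞) := by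
    simp
  have h1le : ((⊤ : ℕ∞) : WithTop ℕ∞) ≠ 0 := by
    simp
  have hG1 : ContDiffOn ℝ (⊤ : ℕ∞) G1 V :=
    (ContinuousLinearMap.apply ℝ ℝ ((1 : ℝ), (0 : ℝ))).contDiff.comp_contDiffOn
      (hf.fderiv_of_isOpen hV htop)
  have hG2 : ContDiffOn ℝ (⊤ : ℕ∞) G2 V :=
    (ContinuousLinearMap.apply ℝ ℝ ((1 : ℝ), (0 : ℝ))).contDiff.comp_contDiffOn
      (hG1.fderiv_of_isOpen hV htop)
  -- pd1 f = G1 on V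
  have heq1 : ∀ p ∈ V, pd1 f p.1 p.2 = G1 p := by
    intro p hp
    have hd : DifferentiableAt ℝ g p :=
      (hf.contDiffAt (hV.mem_nhds hp)).differentiableAt h1le
    have hline : HasDerivAt (fun s : ℝ => (s, p.2)) ((1 : ℝ), (0 : ℝ)) p.1 :=
      (hasDerivAt_id p.1).prodMk (hasDerivAt_const p.1 p.2)
    have := (hd.hasFDerivAt.comp_hasDerivAt p.1 hline).deriv
    simpa [pd1, Function.comp_def, hg] using this
  -- pd1 (pd1 f) = G2 on V
  have heq2 : ∀ p ∈ V, pd1 (pd1 f) p.1 p.2 = G2 p := by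
    intro p hp
    have hev : (fun s => pd1 f s p.2) =ᶠ[nhds p.1] (fun s => G1 (s, p.2)) := by
      have hcont : ContinuousAt (fun s : ℝ => (s, p.2)) p.1 := by fun_prop
      have hmem' : ∀ᶠ s in nhds p.1, (s, p.2) ∈ V :=
        hcont.preimage_mem_nhds (hV.mem_nhds (by simpa using hp))
      filter_upwards [hmem'] with s hs using heq1 _ hs
    have hd : DifferentiableAt ℝ G1 p :=
      (hG1.contDiffAt (hV.mem_nhds hp)).differentiableAt h1le
    have hline : HasDerivAt (fun s : ℝ => (s, p.2)) ((1 : ℝ), (0 : ℝ)) p.1 :=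
      (hasDerivAt_id p.1).prodMk (hasDerivAt_const p.1 p.2)
    have hcomp := (hd.hasFDerivAt.comp_hasDerivAt p.1 hline).deriv
    calc pd1 (pd1 f) p.1 p.2 = deriv (fun s => pd1 f s p.2) p.1 := rfl
      _ = deriv (fun s => G1 (s, p.2)) p.1 := hev.deriv_eq
      _ = G2 p := by simpa [Function.comp_def] using hcomp
  set T : ℝ × ℝ := (a * y + b, U u) with hT
  have hnV : V ∈ nhds T := hV.mem_nhds hmem
  -- second-variable differentiability facts at the base point
  have hdg : DifferentiableAt ℝ g T := (hf.contDiffAt hnV).differentiableAt h1le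
  have hdU : ∀ v, HasDerivAt U (deriv U v) v :=
    fun v => ((hU.differentiable h1le) v).hasDerivAt
  have hvert : DifferentiableAt ℝ (fun x : ℝ => ((a * y + b : ℝ), x)) (U u) := by fun_prop
  have hdf2 : DifferentiableAt ℝ (f (a * y + b)) (U u) := by
    have := hdg.comp (U u) hvert
    exact this
  have hdG2 : DifferentiableAt ℝ G2 T := (hG2.contDiffAt hnV).differentiableAt h1le
  have hdff : DifferentiableAt ℝ (fun x => pd1 (pd1 f) (a * y + b) x) (U u) := by
    have hbase : DifferentiableAt ℝ (fun x : ℝ => G2 (a * y + b, x)) (U u) :=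
      hdG2.comp (U u) hvert
    apply hbase.congr_of_eventuallyEq
    have hmem' : ∀ᶠ x in nhds (U u), ((a * y + b : ℝ), x) ∈ V :=
      hvert.continuousAt.preimage_mem_nhds hnV
    filter_upwards [hmem'] with x hx
    exact heq2 (a * y + b, x) hx
  -- first partials of the transformed function
  set F : ℝ → ℝ → ℝ := fun s v => l * f (a * s + b) (U v) with hF
  have e1 : ∀ s v, pd1 F s v = (l * a) * pd1 f (a * s + b) (U v) := by
    intro s v
    have := deriv_affine_mul (fun x => f x (U v)) l a b ha hl s
    simpa [pd1, hF, mul_comm, mul_assoc] using this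
  have e2 : ∀ s v, pd1 (pd1 F) s v = (l * a * a) * pd1 (pd1 f) (a * s + b) (U v) := by
    intro s v
    have hfun : (fun t => pd1 F t v) = fun t => (l * a) * pd1 f (a * t + b) (U v) :=
      funext fun t => e1 t v
    have : pd1 (pd1 F) s v = deriv (fun t => (l * a) * pd1 f (a * t + b) (U v)) s := by
      show deriv (fun t => pd1 F t v) s = _
      rw [hfun]
    rw [this, deriv_affine_mul (fun x => pd1 f x (U v)) (l * a) a b ha (mul_ne_zero hl ha) s]
    ring_nf
    rfl
  -- second partial of F
  have e3 : pd2 F y u = l * pd2 f (a * y + b) (U u) * deriv U u := by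
    have hcomp : HasDerivAt (fun v => l * f (a * y + b) (U v))
        (l * (deriv (f (a * y + b)) (U u) * deriv U u)) u :=
      (hdf2.hasDerivAt.comp u (hdU u)).const_mul l
    have : pd2 F y u = deriv (fun v => l * f (a * y + b) (U v)) u := rfl
    rw [this, hcomp.deriv]
    show l * (pd2 f (a * y + b) (U u) * deriv U u) = _
    ring
  -- mixed third partial
  have e4 : pd2 (pd1 (pd1 F)) y u
      = (l * a * a) * pd2 (pd1 (pd1 f)) (a * y + b) (U u) * deriv U u := by
    have hfun : (fun v => pd1 (pd1 F) y v)
        = fun v => (l * a * a) * pd1 (pd1 f) (a * y + b) (U v) :=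
      funext fun v => e2 y v
    have hcomp : HasDerivAt (fun v => (l * a * a) * pd1 (pd1 f) (a * y + b) (U v))
        ((l * a * a) * (deriv (fun x => pd1 (pd1 f) (a * y + b) x) (U u) * deriv U u)) u :=
      (hdff.hasDerivAt.comp u (hdU u)).const_mul (l * a * a)
    have step : pd2 (pd1 (pd1 F)) y u
        = deriv (fun v => (l * a * a) * pd1 (pd1 f) (a * y + b) (U v)) u := by
      show deriv (fun v => pd1 (pd1 F) y v) u = _
      rw [hfun]
    rw [step, hcomp.deriv]
    show (l * a * a) * (pd2 (pd1 (pd1 f)) (a * y + b) (U u) * deriv U u) = _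
    ring
  -- assemble
  have hF0 : F y u = l * f (a * y + b) (U u) := rfl
  have hUu := hU' u
  show F y u ^ 2 * pd2 (pd1 (pd1 F)) y u / ((pd1 F y u) ^ 2 * pd2 F y u)
      = J32 f (a * y + b) (U u)
  rw [hF0, e1, e3, e4, J32]
  field_simp
end

section
/- Let f : V → ℝ be smooth on an open set V ⊆ ℝ², let a ≠ 0, b, λ ≠ 0 be real constants, and let U : ℝ → ℝ be smooth with U'(u) ≠ 0 for all u. Define T(y,u) = (a·y + b, U(u)) and f̃(y,u) = λ·f(T(y,u)) on T⁻¹(V). Then at every point (y,u) with f_y(T(y,u)) ≠ 0 and f_u(T(y,u)) ≠ 0 one has J33(f̃)(y,u) = J33(f)(T(y,u)), where J33(f) = f²·f_{yuu}/(f_u²·f_y) − (f·f_{yu}/(f_y·f_u))·(f·f_{uu}/f_u²). -/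
set_option maxHeartbeats 1000000


private lemma hasDerivAt_slice1 {G : ℝ × ℝ → ℝ} {x t : ℝ} (hG : DifferentiableAt ℝ G (x, t)) :
    HasDerivAt (fun s => G (s, t)) (fderiv ℝ G (x, t) (1, 0)) x := by
  have h := hG.hasFDerivAt.comp_hasDerivAt x ((hasDerivAt_id x).prodMk (hasDerivAt_const x t))
  exact h

private lemma hasDerivAt_slice2 {G : ℝ × ℝ → ℝ} {x t : ℝ} (hG : DifferentiableAt ℝ G (x, t)) :
    HasDerivAt (fun v => G (x, v)) (fderiv ℝ G (x, t) (0, 1)) t := by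
  have h := hG.hasFDerivAt.comp_hasDerivAt t ((hasDerivAt_const t x).prodMk (hasDerivAt_id t))
  exact h

/-- Invariance of `J33` under the feedback substitution `T(y,u) = (a·y + b, U(u))`,
`f̃ = λ·(f ∘ T)`, where `U' ≠ 0` everywhere: at every point with
`f_y(T(y,u)) ≠ 0` and `f_u(T(y,u)) ≠ 0`, `J33(f̃)(y,u) = J33(f)(T(y,u))`. -/
theorem J33_invariant (V : Set (ℝ × ℝ)) (hV : IsOpen V) (f : ℝ → ℝ → ℝ)
    (hf : ContDiffOn ℝ (⊤ : ℕ∞) (fun p : ℝ × ℝ => f p.1 p.2) V)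
    (a b l : ℝ) (ha : a ≠ 0) (hl : l ≠ 0)
    (U : ℝ → ℝ) (hU : ContDiff ℝ (⊤ : ℕ∞) U) (hU' : ∀ v : ℝ, deriv U v ≠ 0)
    (y u : ℝ) (hmem : (a * y + b, U u) ∈ V)
    (hfy : pd1 f (a * y + b) (U u) ≠ 0) (hfu : pd2 f (a * y + b) (U u) ≠ 0) :
    J33 (fun s v => l * f (a * s + b) (U v)) y u = J33 f (a * y + b) (U u) := by
  set c : ℝ := a * y + b with hc
  set w : ℝ := U u with hw
  set F : ℝ × ℝ → ℝ := fun p => f p.1 p.2 with hF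
  set G1 : ℝ × ℝ → ℝ := fun p => fderiv ℝ F p (1, 0) with hG1def
  set G2 : ℝ × ℝ → ℝ := fun p => fderiv ℝ F p (0, 1) with hG2def
  set G21 : ℝ × ℝ → ℝ := fun p => fderiv ℝ G1 p (0, 1) with hG21def
  set G22 : ℝ × ℝ → ℝ := fun p => fderiv ℝ G2 p (0, 1) with hG22def
  set G221 : ℝ × ℝ → ℝ := fun p => fderiv ℝ G21 p (0, 1) with hG221def
  have htop : ((⊤ : ℕ∞) : WithTop ℕ∞) + 1 ≤ ((⊤ : ℕ∞) : WithTop ℕ∞) := by exact_mod_cast le_top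
  have hFV : ContDiffOn ℝ (⊤ : ℕ∞) F V := hf
  have hG1V : ContDiffOn ℝ (⊤ : ℕ∞) G1 V :=
    (hFV.fderiv_of_isOpen hV htop).clm_apply contDiffOn_const
  have hG2V : ContDiffOn ℝ (⊤ : ℕ∞) G2 V :=
    (hFV.fderiv_of_isOpen hV htop).clm_apply contDiffOn_const
  have hG21V : ContDiffOn ℝ (⊤ : ℕ∞) G21 V :=
    (hG1V.fderiv_of_isOpen hV htop).clm_apply contDiffOn_const
  have hG22V : ContDiffOn ℝ (⊤ : ℕ∞) G22 V :=
    (hG2V.fderiv_of_isOpen hV htop).clm_apply contDiffOn_const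
  have hdF : ∀ p ∈ V, DifferentiableAt ℝ F p := fun p hp =>
    (hFV.differentiableOn (by simp)).differentiableAt (hV.mem_nhds hp)
  have hdG1 : ∀ p ∈ V, DifferentiableAt ℝ G1 p := fun p hp =>
    (hG1V.differentiableOn (by simp)).differentiableAt (hV.mem_nhds hp)
  have hdG2 : ∀ p ∈ V, DifferentiableAt ℝ G2 p := fun p hp =>
    (hG2V.differentiableOn (by simp)).differentiableAt (hV.mem_nhds hp)
  have hdG21 : ∀ p ∈ V, DifferentiableAt ℝ G21 p := fun p hp =>
    (hG21V.differentiableOn (by simp)).differentiableAt (hV.mem_nhds hp)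
  have hdG22 : ∀ p ∈ V, DifferentiableAt ℝ G22 p := fun p hp =>
    (hG22V.differentiableOn (by simp)).differentiableAt (hV.mem_nhds hp)
  have hUd : Differentiable ℝ U := hU.differentiable (by simp)
  have hU2 : ContDiff ℝ (⊤ : ℕ∞) (deriv U) := (contDiff_infty_iff_deriv.mp hU).2
  have hU'd : Differentiable ℝ (deriv U) := hU2.differentiable (by simp)
  -- partial derivatives of f expressed through fderiv of F
  have e1 : ∀ x t : ℝ, (x, t) ∈ V → pd1 f x t = G1 (x, t) := by
    intro x t h
    simp only [pd1]
    exact (hasDerivAt_slice1 (hdF _ h)).deriv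
  have e2 : ∀ x t : ℝ, (x, t) ∈ V → pd2 f x t = G2 (x, t) := by
    intro x t h
    simp only [pd2]
    exact (hasDerivAt_slice2 (hdF _ h)).deriv
  have e21 : ∀ x t : ℝ, (x, t) ∈ V → pd2 (pd1 f) x t = G21 (x, t) := by
    intro x t h
    have hcont : ContinuousAt (fun v : ℝ => ((x, v) : ℝ × ℝ)) t :=
      (continuous_const.prodMk continuous_id).continuousAt
    have hev : (fun v => pd1 f x v) =ᶠ[nhds t] fun v => G1 (x, v) := by
      filter_upwards [hcont.preimage_mem_nhds (hV.mem_nhds h)] with v hv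
      exact e1 x v hv
    simp only [pd2]
    rw [hev.deriv_eq]
    exact (hasDerivAt_slice2 (hdG1 _ h)).deriv
  have e22 : ∀ x t : ℝ, (x, t) ∈ V → pd2 (pd2 f) x t = G22 (x, t) := by
    intro x t h
    have hcont : ContinuousAt (fun v : ℝ => ((x, v) : ℝ × ℝ)) t :=
      (continuous_const.prodMk continuous_id).continuousAt
    have hev : (fun v => pd2 f x v) =ᶠ[nhds t] fun v => G2 (x, v) := by
      filter_upwards [hcont.preimage_mem_nhds (hV.mem_nhds h)] with v hv
      exact e2 x v hv
    simp only [pd2]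
    rw [hev.deriv_eq]
    exact (hasDerivAt_slice2 (hdG2 _ h)).deriv
  have e221 : ∀ x t : ℝ, (x, t) ∈ V → pd2 (pd2 (pd1 f)) x t = G221 (x, t) := by
    intro x t h
    have hcont : ContinuousAt (fun v : ℝ => ((x, v) : ℝ × ℝ)) t :=
      (continuous_const.prodMk continuous_id).continuousAt
    have hev : (fun v => pd2 (pd1 f) x v) =ᶠ[nhds t] fun v => G21 (x, v) := by
      filter_upwards [hcont.preimage_mem_nhds (hV.mem_nhds h)] with v hv
      exact e21 x v hv
    simp only [pd2]
    rw [hev.deriv_eq]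
    exact (hasDerivAt_slice2 (hdG21 _ h)).deriv
  -- the transformed function
  set ft : ℝ → ℝ → ℝ := fun s v => l * f (a * s + b) (U v) with hft
  have haff : ∀ x : ℝ, HasDerivAt (fun s : ℝ => a * s + b) a x := by
    intro x
    simpa using ((hasDerivAt_id x).const_mul a).add_const b
  -- first-order partials of ft
  have t1 : ∀ x v : ℝ, (a * x + b, U v) ∈ V →
      pd1 ft x v = l * (G1 (a * x + b, U v) * a) := by
    intro x v h
    have h1 : HasDerivAt (fun s => F (a * s + b, U v)) (G1 (a * x + b, U v) * a) x :=
      by have := (hasDerivAt_slice1 (hdF _ h)).comp x (haff x); exact this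
    simp only [pd1]
    exact (h1.const_mul l).deriv
  have t2 : ∀ x v : ℝ, (a * x + b, U v) ∈ V →
      pd2 ft x v = l * (G2 (a * x + b, U v) * deriv U v) := by
    intro x v h
    have h1 : HasDerivAt (fun t => F (a * x + b, U t))
        (G2 (a * x + b, U v) * deriv U v) v :=
      (hasDerivAt_slice2 (hdF _ h)).comp v (hUd v).hasDerivAt
    simp only [pd2]
    exact (h1.const_mul l).deriv
  -- second-order mixed partial of ft
  have t21 : ∀ v : ℝ, (c, U v) ∈ V →
      pd2 (pd1 ft) y v = l * (G21 (c, U v) * deriv U v * a) := by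
    intro v h
    have hcont : ContinuousAt (fun t : ℝ => ((c, U t) : ℝ × ℝ)) v :=
      (continuous_const.prodMk hU.continuous).continuousAt
    have hev : (fun t => pd1 ft y t) =ᶠ[nhds v] fun t => l * (G1 (c, U t) * a) := by
      filter_upwards [hcont.preimage_mem_nhds (hV.mem_nhds h)] with t ht
      exact t1 y t ht
    have h1 : HasDerivAt (fun t => G1 (c, U t)) (G21 (c, U v) * deriv U v) v :=
      (hasDerivAt_slice2 (hdG1 _ h)).comp v (hUd v).hasDerivAt
    simp only [pd2]
    rw [hev.deriv_eq]
    have := ((h1.mul_const a).const_mul l).deriv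
    simpa [mul_comm, mul_assoc, mul_left_comm] using this
  -- second-order pure partial of ft
  have t22 : ∀ v : ℝ, (c, U v) ∈ V →
      pd2 (pd2 ft) y v
        = l * (G22 (c, U v) * deriv U v * deriv U v + G2 (c, U v) * deriv (deriv U) v) := by
    intro v h
    have hcont : ContinuousAt (fun t : ℝ => ((c, U t) : ℝ × ℝ)) v :=
      (continuous_const.prodMk hU.continuous).continuousAt
    have hev : (fun t => pd2 ft y t) =ᶠ[nhds v]
        fun t => l * (G2 (c, U t) * deriv U t) := by
      filter_upwards [hcont.preimage_mem_nhds (hV.mem_nhds h)] with t ht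
      exact t2 y t ht
    have h1 : HasDerivAt (fun t => G2 (c, U t)) (G22 (c, U v) * deriv U v) v :=
      (hasDerivAt_slice2 (hdG2 _ h)).comp v (hUd v).hasDerivAt
    have h2 : HasDerivAt (deriv U) (deriv (deriv U) v) v := (hU'd v).hasDerivAt
    simp only [pd2]
    rw [hev.deriv_eq]
    have := ((h1.mul h2).const_mul l).deriv
    simpa [mul_comm, mul_assoc, mul_left_comm, mul_add, add_comm] using this
  -- third-order partial of ft
  have t221 : pd2 (pd2 (pd1 ft)) y u
      = l * ((G221 (c, w) * deriv U u * deriv U u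
          + G21 (c, w) * deriv (deriv U) u) * a) := by
    have hcont : ContinuousAt (fun t : ℝ => ((c, U t) : ℝ × ℝ)) u :=
      (continuous_const.prodMk hU.continuous).continuousAt
    have hev : (fun v => pd2 (pd1 ft) y v) =ᶠ[nhds u]
        fun v => l * (G21 (c, U v) * deriv U v * a) := by
      filter_upwards [hcont.preimage_mem_nhds (hV.mem_nhds hmem)] with v hv
      exact t21 v hv
    have h1 : HasDerivAt (fun v => G21 (c, U v)) (G221 (c, w) * deriv U u) u :=
      (hasDerivAt_slice2 (hdG21 _ hmem)).comp u (hUd u).hasDerivAt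
    have h2 : HasDerivAt (deriv U) (deriv (deriv U) u) u := (hU'd u).hasDerivAt
    simp only [pd2]
    rw [hev.deriv_eq]
    have := (((h1.mul h2).mul_const a).const_mul l).deriv
    simpa [mul_comm, mul_assoc, mul_left_comm, mul_add, add_comm] using this
  -- assemble
  have hA : G1 (c, w) ≠ 0 := by rw [← e1 c w hmem]; exact hfy
  have hB : G2 (c, w) ≠ 0 := by rw [← e2 c w hmem]; exact hfu
  have hU'u : deriv U u ≠ 0 := hU' u
  have hftv : ft y u = l * f c w := rfl
  simp only [J33, J22]
  rw [t1 y u hmem, t2 y u hmem, t21 u hmem, t22 u hmem, t221,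
    e1 c w hmem, e2 c w hmem, e21 c w hmem, e22 c w hmem, e221 c w hmem, hftv]
  have hfcw : f c w = F (c, w) := rfl
  simp only [← hc, ← hw]
  field_simp
  ring
end

section
/- Let f : V → ℝ be smooth on an open set V ⊆ ℝ², let a ≠ 0, b, λ ≠ 0 be real constants, and let U : ℝ → ℝ be smooth with U'(u) ≠ 0 for all u. Define T(y,u) = (a·y + b, U(u)) and f̃ = λ·(f ∘ T) on T⁻¹(V). Then for every smooth function g : V → ℝ and every point (y,u) ∈ T⁻¹(V) with f(T(y,u)) ≠ 0 and f_u(T(y,u)) ≠ 0, one has (f̃/f̃_u)·∂_u(g ∘ T) = ((f/f_u)·∂_u g) ∘ T at (y,u); i.e. the derivation ∇₂ = (f/f_u)·∂/∂u is equivariant under the substitution T. -/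
/-- Equivariance of the invariant derivation `∇₂ = (f/f_u)·∂/∂u` under the feedback
substitution `T(y,u) = (a·y + b, U(u))`, `f̃ = λ·(f ∘ T)`, where `U' ≠ 0` everywhere:
for every smooth `g` and every point of `T⁻¹(V)` with `f(T(y,u)) ≠ 0` and
`f_u(T(y,u)) ≠ 0`, `(f̃/f̃_u)·∂_u(g ∘ T) = ((f/f_u)·∂_u g) ∘ T`. -/
theorem nabla2_equivariant (V : Set (ℝ × ℝ)) (hV : IsOpen V) (f : ℝ → ℝ → ℝ)
    (hf : ContDiffOn ℝ (⊤ : ℕ∞) (fun p : ℝ × ℝ => f p.1 p.2) V)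
    (a b l : ℝ) (ha : a ≠ 0) (hl : l ≠ 0)
    (U : ℝ → ℝ) (hU : ContDiff ℝ (⊤ : ℕ∞) U) (hU' : ∀ v : ℝ, deriv U v ≠ 0)
    (g : ℝ → ℝ → ℝ) (hg : ContDiffOn ℝ (⊤ : ℕ∞) (fun p : ℝ × ℝ => g p.1 p.2) V)
    (y u : ℝ) (hmem : (a * y + b, U u) ∈ V)
    (hf0 : f (a * y + b) (U u) ≠ 0) (hfu : pd2 f (a * y + b) (U u) ≠ 0) :
    nab2 (fun s v => l * f (a * s + b) (U v)) (fun s v => g (a * s + b) (U v)) y u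
      = nab2 f g (a * y + b) (U u) := by
  have hUd : DifferentiableAt ℝ U u := hU.differentiable (by simp) u
  have hfd : DifferentiableAt ℝ (fun p : ℝ × ℝ => f p.1 p.2) (a * y + b, U u) :=
    (hf.contDiffAt (hV.mem_nhds hmem)).differentiableAt (by simp)
  have hgd : DifferentiableAt ℝ (fun p : ℝ × ℝ => g p.1 p.2) (a * y + b, U u) :=
    (hg.contDiffAt (hV.mem_nhds hmem)).differentiableAt (by simp)
  have hin : DifferentiableAt ℝ (fun v : ℝ => ((a * y + b : ℝ), v)) (U u) :=
    (differentiableAt_const _).prodMk differentiableAt_id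
  have hf2 : DifferentiableAt ℝ (fun v => f (a * y + b) v) (U u) := hfd.comp (U u) hin
  have hg2 : DifferentiableAt ℝ (fun v => g (a * y + b) v) (U u) := hgd.comp (U u) hin
  have hfc : deriv (fun v => f (a * y + b) (U v)) u
      = deriv (fun v => f (a * y + b) v) (U u) * deriv U u := deriv_comp (x := u) hf2 hUd
  have hgc : deriv (fun v => g (a * y + b) (U v)) u
      = deriv (fun v => g (a * y + b) v) (U u) * deriv U u := deriv_comp (x := u) hg2 hUd
  have hlc : deriv (fun v => l * f (a * y + b) (U v)) u
      = l * deriv (fun v => f (a * y + b) (U v)) u :=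
    deriv_const_mul l (hf2.comp u hUd)
  simp only [nab2, pd2] at *
  rw [hlc, hfc, hgc]
  have hU0 := hU' u
  field_simp
end

section
/- Let f : V → ℝ be smooth on an open set V ⊆ ℝ² with f, f_y, f_u nowhere zero on V, and let ∇₁ = (f/f_y)·∂/∂y and ∇₂ = (f/f_u)·∂/∂u be vector fields on V. Then their Lie bracket satisfies [∇₁, ∇₂] = (−1 + J22(f))·∇₁ + (1 − J22(f))·∇₂ on V, where J22(f) = f·f_{yu}/(f_y·f_u); equivalently, for every smooth g : V → ℝ, ∇₁(∇₂ g) − ∇₂(∇₁ g) = (−1 + J22(f))·∇₁ g + (1 − J22(f))·∇₂ g. -/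
open Filter Topology in
private lemma hasDerivAt_comp_fst {E : Type*} [NormedAddCommGroup E] [NormedSpace ℝ E]
    {F : ℝ × ℝ → E} {L : ℝ × ℝ →L[ℝ] E} {a b : ℝ} (h : HasFDerivAt F L (a, b)) :
    HasDerivAt (fun s => F (s, b)) (L (1, 0)) a := by
  simpa [Function.comp_def] using h.comp_hasDerivAt a ((hasDerivAt_id a).prodMk (hasDerivAt_const a b))

open Filter Topology in
private lemma hasDerivAt_comp_snd {E : Type*} [NormedAddCommGroup E] [NormedSpace ℝ E]
    {F : ℝ × ℝ → E} {L : ℝ × ℝ →L[ℝ] E} {a b : ℝ} (h : HasFDerivAt F L (a, b)) :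
    HasDerivAt (fun t => F (a, t)) (L (0, 1)) b := by
  simpa [Function.comp_def] using h.comp_hasDerivAt b ((hasDerivAt_const b a).prodMk (hasDerivAt_id b))

open Filter Topology

set_option maxHeartbeats 1600000 in
/-- The commutation relation `[∇₁, ∇₂] = (−1 + J22)·∇₁ + (1 − J22)·∇₂` for the invariant
derivations `∇₁ = (f/f_y)·∂/∂y` and `∇₂ = (f/f_u)·∂/∂u`: for every smooth `g` on `V`,
`∇₁(∇₂ g) − ∇₂(∇₁ g) = (−1 + J22(f))·∇₁ g + (1 − J22(f))·∇₂ g` on `V`. -/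
theorem bracket_nabla1_nabla2 (V : Set (ℝ × ℝ)) (hV : IsOpen V) (f : ℝ → ℝ → ℝ)
    (hf : ContDiffOn ℝ (⊤ : ℕ∞) (fun p : ℝ × ℝ => f p.1 p.2) V)
    (hf0 : ∀ y u : ℝ, (y, u) ∈ V → f y u ≠ 0)
    (hfy : ∀ y u : ℝ, (y, u) ∈ V → pd1 f y u ≠ 0)
    (hfu : ∀ y u : ℝ, (y, u) ∈ V → pd2 f y u ≠ 0)
    (g : ℝ → ℝ → ℝ) (hg : ContDiffOn ℝ (⊤ : ℕ∞) (fun p : ℝ × ℝ => g p.1 p.2) V) :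
    ∀ y u : ℝ, (y, u) ∈ V →
      nab1 f (nab2 f g) y u - nab2 f (nab1 f g) y u
        = (-1 + J22 f y u) * nab1 f g y u + (1 - J22 f y u) * nab2 f g y u := by

  intro y u hp
  set F : ℝ × ℝ → ℝ := fun q => f q.1 q.2 with hFdef
  set G : ℝ × ℝ → ℝ := fun q => g q.1 q.2 with hGdef
  set f' : ℝ × ℝ → (ℝ × ℝ →L[ℝ] ℝ) := fderiv ℝ F with hf'def
  set g' : ℝ × ℝ → (ℝ × ℝ →L[ℝ] ℝ) := fderiv ℝ G with hg'def
  set f'' : ℝ × ℝ →L[ℝ] (ℝ × ℝ →L[ℝ] ℝ) := fderiv ℝ f' (y, u) with hf''def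
  set g'' : ℝ × ℝ →L[ℝ] (ℝ × ℝ →L[ℝ] ℝ) := fderiv ℝ g' (y, u) with hg''def
  have hFd : ∀ q ∈ V, HasFDerivAt F (f' q) q := fun q hq =>
    ((hf.contDiffAt (hV.mem_nhds hq)).differentiableAt (by simp)).hasFDerivAt
  have hGd : ∀ q ∈ V, HasFDerivAt G (g' q) q := fun q hq =>
    ((hg.contDiffAt (hV.mem_nhds hq)).differentiableAt (by simp)).hasFDerivAt
  have hf'c : ContDiffAt ℝ (⊤ : ℕ∞) f' (y, u) :=
    (hf.contDiffAt (hV.mem_nhds hp)).fderiv_right (by exact_mod_cast le_top)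
  have hg'c : ContDiffAt ℝ (⊤ : ℕ∞) g' (y, u) :=
    (hg.contDiffAt (hV.mem_nhds hp)).fderiv_right (by exact_mod_cast le_top)
  have hf''at : HasFDerivAt f' f'' (y, u) :=
    (hf'c.differentiableAt (by simp)).hasFDerivAt
  have hg''at : HasFDerivAt g' g'' (y, u) :=
    (hg'c.differentiableAt (by simp)).hasFDerivAt
  have hsymf : f'' (1, 0) (0, 1) = f'' (0, 1) (1, 0) := by
    refine second_derivative_symmetric_of_eventually (f := F) ?_ hf''at _ _
    filter_upwards [hV.mem_nhds hp] with q hq using hFd q hq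
  have hsymg : g'' (1, 0) (0, 1) = g'' (0, 1) (1, 0) := by
    refine second_derivative_symmetric_of_eventually (f := G) ?_ hg''at _ _
    filter_upwards [hV.mem_nhds hp] with q hq using hGd q hq
  have hpd1f : ∀ a b, (a, b) ∈ V → pd1 f a b = f' (a, b) (1, 0) := fun a b hab =>
    (hasDerivAt_comp_fst (hFd _ hab)).deriv
  have hpd2f : ∀ a b, (a, b) ∈ V → pd2 f a b = f' (a, b) (0, 1) := fun a b hab =>
    (hasDerivAt_comp_snd (hFd _ hab)).deriv
  have hpd1g : ∀ a b, (a, b) ∈ V → pd1 g a b = g' (a, b) (1, 0) := fun a b hab =>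
    (hasDerivAt_comp_fst (hGd _ hab)).deriv
  have hpd2g : ∀ a b, (a, b) ∈ V → pd2 g a b = g' (a, b) (0, 1) := fun a b hab =>
    (hasDerivAt_comp_snd (hGd _ hab)).deriv
  have hy' : ∀ᶠ s in 𝓝 y, (s, u) ∈ V :=
    (hV.preimage (continuous_id.prodMk continuous_const)).mem_nhds hp
  have hu' : ∀ᶠ t in 𝓝 u, (y, t) ∈ V :=
    (hV.preimage (continuous_const.prodMk continuous_id)).mem_nhds hp
  -- abbreviations for values at the point
  set A := f y u with hA
  set Ay := f' (y, u) (1, 0) with hAy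
  set Au := f' (y, u) (0, 1) with hAu
  set Ayu := f'' (0, 1) (1, 0) with hAyu
  set By := g' (y, u) (1, 0) with hBy
  set Bu := g' (y, u) (0, 1) with hBu
  set Byu := g'' (0, 1) (1, 0) with hByu
  have hAy0 : Ay ≠ 0 := by rw [hAy, ← hpd1f y u hp]; exact hfy y u hp
  have hAu0 : Au ≠ 0 := by rw [hAu, ← hpd2f y u hp]; exact hfu y u hp
  -- mixed partial of f
  have hJ : pd2 (pd1 f) y u = Ayu := by
    have he : (fun t => pd1 f y t) =ᶠ[𝓝 u] fun t => f' (y, t) (1, 0) := by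
      filter_upwards [hu'] with t ht using hpd1f y t ht
    have hd : HasDerivAt (fun t => f' (y, t) (1, 0)) Ayu u := by
      simpa using (hasDerivAt_comp_snd hf''at).clm_apply (hasDerivAt_const u ((1 : ℝ), (0 : ℝ)))
    exact he.deriv_eq.trans hd.deriv
  -- derivatives of the partial-derivative fields at (y,u)
  have hdf_1u : HasDerivAt (fun s => f' (s, u) (0, 1)) (f'' (1, 0) (0, 1)) y := by
    simpa using (hasDerivAt_comp_fst hf''at).clm_apply (hasDerivAt_const y ((0 : ℝ), (1 : ℝ)))
  have hdg_1u : HasDerivAt (fun s => g' (s, u) (0, 1)) (g'' (1, 0) (0, 1)) y := by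
    simpa using (hasDerivAt_comp_fst hg''at).clm_apply (hasDerivAt_const y ((0 : ℝ), (1 : ℝ)))
  have hdf_2y : HasDerivAt (fun t => f' (y, t) (1, 0)) (f'' (0, 1) (1, 0)) u := by
    simpa using (hasDerivAt_comp_snd hf''at).clm_apply (hasDerivAt_const u ((1 : ℝ), (0 : ℝ)))
  have hdg_2y : HasDerivAt (fun t => g' (y, t) (1, 0)) (g'' (0, 1) (1, 0)) u := by
    simpa using (hasDerivAt_comp_snd hg''at).clm_apply (hasDerivAt_const u ((1 : ℝ), (0 : ℝ)))
  -- first big term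
  have E1 : nab1 f (nab2 f g) y u
      = A / Ay * (((Ay * Au - A * Ayu) / Au ^ 2) * Bu + A / Au * Byu) := by
    have he : (fun s => nab2 f g s u)
        =ᶠ[𝓝 y] fun s => F (s, u) / f' (s, u) (0, 1) * g' (s, u) (0, 1) := by
      filter_upwards [hy'] with s hs
      show f s u / pd2 f s u * pd2 g s u = _
      rw [hpd2f s u hs, hpd2g s u hs]
    have hd : HasDerivAt (fun s => F (s, u) / f' (s, u) (0, 1) * g' (s, u) (0, 1))
        (((Ay * Au - A * f'' (1, 0) (0, 1)) / Au ^ 2) * Bu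
          + A / Au * g'' (1, 0) (0, 1)) y := by
      have hnum : HasDerivAt (fun s => F (s, u)) Ay y := hasDerivAt_comp_fst (hFd _ hp)
      exact (hnum.div hdf_1u hAu0).mul hdg_1u
    have : pd1 (nab2 f g) y u
        = ((Ay * Au - A * Ayu) / Au ^ 2) * Bu + A / Au * Byu := by
      rw [← hsymf, ← hsymg]
      exact he.deriv_eq.trans hd.deriv
    show f y u / pd1 f y u * pd1 (nab2 f g) y u = _
    rw [this, hpd1f y u hp]
  -- second big term
  have E2 : nab2 f (nab1 f g) y u
      = A / Au * (((Au * Ay - A * Ayu) / Ay ^ 2) * By + A / Ay * Byu) := by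
    have he : (fun t => nab1 f g y t)
        =ᶠ[𝓝 u] fun t => F (y, t) / f' (y, t) (1, 0) * g' (y, t) (1, 0) := by
      filter_upwards [hu'] with t ht
      show f y t / pd1 f y t * pd1 g y t = _
      rw [hpd1f y t ht, hpd1g y t ht]
    have hd : HasDerivAt (fun t => F (y, t) / f' (y, t) (1, 0) * g' (y, t) (1, 0))
        (((Au * Ay - A * Ayu) / Ay ^ 2) * By + A / Ay * Byu) u := by
      have hnum : HasDerivAt (fun t => F (y, t)) Au u := hasDerivAt_comp_snd (hFd _ hp)
      exact (hnum.div hdf_2y hAy0).mul hdg_2y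
    have : pd2 (nab1 f g) y u
        = ((Au * Ay - A * Ayu) / Ay ^ 2) * By + A / Ay * Byu :=
      he.deriv_eq.trans hd.deriv
    show f y u / pd2 f y u * pd2 (nab1 f g) y u = _
    rw [this, hpd2f y u hp]
  have E3 : J22 f y u = A * Ayu / (Ay * Au) := by
    show f y u * pd2 (pd1 f) y u / (pd1 f y u * pd2 f y u) = _
    rw [hJ, hpd1f y u hp, hpd2f y u hp]
  have E4 : nab1 f g y u = A / Ay * By := by
    show f y u / pd1 f y u * pd1 g y u = _
    rw [hpd1f y u hp, hpd1g y u hp]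
  have E5 : nab2 f g y u = A / Au * Bu := by
    show f y u / pd2 f y u * pd2 g y u = _
    rw [hpd2f y u hp, hpd2g y u hp]
  rw [E1, E2, E3, E4, E5]
  field_simp
  ring
end

section
/- Let f : V → ℝ be smooth on an open set V ⊆ ℝ² with f, f_y and f_u nowhere zero on V. Then, on V, (f/f_u)·∂_u(f·f_{yu}/(f_y·f_u)) = J22 − J22² + J33, where J22 = f·f_{yu}/(f_y·f_u) and J33 = f²·f_{yuu}/(f_u²·f_y) − J22·f·f_{uu}/f_u²; i.e. ∇₂(J22) = J22 − J22² + J33. -/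
open Filter Topology in
private lemma sliceDeriv2' {G : ℝ × ℝ → ℝ} {y u : ℝ}
    (hG : DifferentiableAt ℝ G (y, u)) :
    HasDerivAt (fun u' => G (y, u')) (fderiv ℝ G (y, u) (0, 1)) u := by
  have h1 : HasDerivAt (fun u' : ℝ => ((y : ℝ), u')) ((0 : ℝ), (1 : ℝ)) u :=
    HasDerivAt.prodMk (hasDerivAt_const u y) (hasDerivAt_id u)
  exact hG.hasFDerivAt.comp_hasDerivAt u h1

open Filter Topology in
private lemma sliceDeriv1' {G : ℝ × ℝ → ℝ} {y u : ℝ}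
    (hG : DifferentiableAt ℝ G (y, u)) :
    HasDerivAt (fun y' => G (y', u)) (fderiv ℝ G (y, u) (1, 0)) y := by
  have h1 : HasDerivAt (fun y' : ℝ => ((y' : ℝ), u)) ((1 : ℝ), (0 : ℝ)) y :=
    HasDerivAt.prodMk (hasDerivAt_id y) (hasDerivAt_const y u)
  exact hG.hasFDerivAt.comp_hasDerivAt y h1

open Filter Topology in
private lemma pd_key (V : Set (ℝ × ℝ)) (hV : IsOpen V) (g : ℝ → ℝ → ℝ) (G : ℝ × ℝ → ℝ)
    (hG : ContDiffOn ℝ (⊤ : ℕ∞) G V) (heq : ∀ p ∈ V, g p.1 p.2 = G p) :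
    (∀ p ∈ V, pd2 g p.1 p.2 = fderiv ℝ G p (0, 1)) ∧
    (∀ p ∈ V, pd1 g p.1 p.2 = fderiv ℝ G p (1, 0)) ∧
    (∀ p ∈ V, HasDerivAt (fun u' => g p.1 u') (fderiv ℝ G p (0, 1)) p.2) ∧
    ContDiffOn ℝ (⊤ : ℕ∞) (fun p => fderiv ℝ G p (0, 1)) V ∧
    ContDiffOn ℝ (⊤ : ℕ∞) (fun p => fderiv ℝ G p (1, 0)) V := by
  have hdiff : ∀ p ∈ V, DifferentiableAt ℝ G p := fun p hp =>
    (hG.contDiffAt (hV.mem_nhds hp)).differentiableAt (by simp)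
  have hev2 : ∀ p ∈ V, (fun u' => g p.1 u') =ᶠ[𝓝 p.2] fun u' => G (p.1, u') := by
    rintro ⟨y, u⟩ hp
    have hm : {u' | (y, u') ∈ V} ∈ 𝓝 u := (hV.preimage (Continuous.prodMk_right y)).mem_nhds hp
    filter_upwards [hm] with u' hu' using heq (y, u') hu'
  have hev1 : ∀ p ∈ V, (fun y' => g y' p.2) =ᶠ[𝓝 p.1] fun y' => G (y', p.2) := by
    rintro ⟨y, u⟩ hp
    have hm : {y' | (y', u) ∈ V} ∈ 𝓝 y :=
      (hV.preimage (continuous_id.prodMk continuous_const)).mem_nhds hp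
    filter_upwards [hm] with y' hy' using heq (y', u) hy'
  have hHD : ∀ p ∈ V, HasDerivAt (fun u' => g p.1 u') (fderiv ℝ G p (0, 1)) p.2 := by
    rintro ⟨y, u⟩ hp
    exact ((hev2 (y, u) hp).hasDerivAt_iff).mpr (sliceDeriv2' (hdiff (y, u) hp))
  refine ⟨fun p hp => (hHD p hp).deriv, ?_, hHD, ?_, ?_⟩
  · rintro ⟨y, u⟩ hp
    exact (((hev1 (y, u) hp).hasDerivAt_iff).mpr (sliceDeriv1' (hdiff (y, u) hp))).deriv
  · exact (hG.fderiv_of_isOpen hV (by exact_mod_cast le_top)).clm_apply contDiffOn_const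
  · exact (hG.fderiv_of_isOpen hV (by exact_mod_cast le_top)).clm_apply contDiffOn_const

/-- The syzygy `∇₂(J22) = J22 − J22² + J33` on an open set where `f`, `f_y` and `f_u`
are nowhere zero. -/
theorem nabla2_J22 (V : Set (ℝ × ℝ)) (hV : IsOpen V) (f : ℝ → ℝ → ℝ)
    (hf : ContDiffOn ℝ (⊤ : ℕ∞) (fun p : ℝ × ℝ => f p.1 p.2) V)
    (hf0 : ∀ y u : ℝ, (y, u) ∈ V → f y u ≠ 0)
    (hfy : ∀ y u : ℝ, (y, u) ∈ V → pd1 f y u ≠ 0)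
    (hfu : ∀ y u : ℝ, (y, u) ∈ V → pd2 f y u ≠ 0) :
    ∀ y u : ℝ, (y, u) ∈ V →
      nab2 f (J22 f) y u = J22 f y u - (J22 f y u) ^ 2 + J33 f y u := by
  intro y u hyu
  set F : ℝ × ℝ → ℝ := fun p : ℝ × ℝ => f p.1 p.2 with hFdef
  obtain ⟨e02, e01, eH0, s02, s01⟩ := pd_key V hV f F hf (fun p _ => rfl)
  set G1 : ℝ × ℝ → ℝ := fun p => fderiv ℝ F p (1, 0) with hG1def
  set G2 : ℝ × ℝ → ℝ := fun p => fderiv ℝ F p (0, 1) with hG2def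
  obtain ⟨e12, _, eH1, s12, _⟩ := pd_key V hV (pd1 f) G1 s01 e01
  obtain ⟨e22, _, eH2, _, _⟩ := pd_key V hV (pd2 f) G2 s02 e02
  set G12 : ℝ × ℝ → ℝ := fun p => fderiv ℝ G1 p (0, 1) with hG12def
  obtain ⟨e32, _, eH3, _, _⟩ := pd_key V hV (pd2 (pd1 f)) G12 s12 e12
  set a := f y u with ha
  set b := pd1 f y u with hb
  set c := pd2 f y u with hc
  set d := pd2 (pd1 f) y u with hd
  set e := pd2 (pd2 f) y u with he
  set g3 := pd2 (pd2 (pd1 f)) y u with hg3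
  have hb0 : b ≠ 0 := hfy y u hyu
  have hc0 : c ≠ 0 := hfu y u hyu
  have H0 : HasDerivAt (fun u' => f y u') c u := by
    have := eH0 (y, u) hyu
    rwa [← e02 (y, u) hyu] at this
  have H1 : HasDerivAt (fun u' => pd1 f y u') d u := by
    have := eH1 (y, u) hyu
    rwa [← e12 (y, u) hyu] at this
  have H2 : HasDerivAt (fun u' => pd2 f y u') e u := by
    have := eH2 (y, u) hyu
    rwa [← e22 (y, u) hyu] at this
  have H3 : HasDerivAt (fun u' => pd2 (pd1 f) y u') g3 u := by
    have := eH3 (y, u) hyu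
    rwa [← e32 (y, u) hyu] at this
  have hden : b * c ≠ 0 := mul_ne_zero hb0 hc0
  have Hq : HasDerivAt (fun u' => f y u' * pd2 (pd1 f) y u' / (pd1 f y u' * pd2 f y u'))
      (((c * d + a * g3) * (b * c) - a * d * (d * c + b * e)) / (b * c) ^ 2) u :=
    (H0.mul H3).div (H1.mul H2) hden
  have hD : pd2 (J22 f) y u
      = ((c * d + a * g3) * (b * c) - a * d * (d * c + b * e)) / (b * c) ^ 2 := Hq.deriv
  have lhs : nab2 f (J22 f) y u
      = a / c * (((c * d + a * g3) * (b * c) - a * d * (d * c + b * e)) / (b * c) ^ 2) := by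
    rw [nab2, hD]
  rw [lhs, J22, J33, J22, ← ha, ← hb, ← hc, ← hd, ← he, ← hg3]
  field_simp
  ring
end

section
/- Let I, J ⊆ ℝ be open intervals and let f : I × J → ℝ be smooth with f(y,u) ≠ 0 and f_y(y,u) ≠ 0 for all (y,u) ∈ I × J.687 Then J31(f) = f²·f_{yyy}/f_y³ vanishes identically on I × J if and only if there exist smooth functions α, β, γ : J → ℝ such that f(y,u) = α(u)·y² + β(u)·y + γ(u) for all (y,u) ∈ I × J. (Equivalently, the equation y'' + f(y,u) = 0 is locally equivalent to y'' + α(u)·y² + β(u)·y + γ(u) = 0 with respect to feedback transformations if and only if J31(f) = 0.) -/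

lemma const_of_hasDerivAt_zero {s : Set ℝ} (hs : Convex ℝ s) {φ : ℝ → ℝ}
    (h : ∀ x ∈ s, HasDerivAt φ 0 x) : ∀ x ∈ s, ∀ y ∈ s, φ x = φ y := by
  intro x hx y hy
  have h2 := hs.norm_image_sub_le_of_norm_hasDerivWithin_le
    (C := 0) (f' := fun _ => (0:ℝ)) (fun z hz => (h z hz).hasDerivWithinAt)
    (fun z hz => by simp) hy hx
  have : ‖φ x - φ y‖ ≤ 0 := by simpa using h2
  have := norm_nonneg (φ x - φ y)
  have : φ x - φ y = 0 := by
    rw [← norm_eq_zero]; linarith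
  linarith [sub_eq_zero.mp this]
  
lemma quadratic_of_deriv3_zero {I : Set ℝ} (hIo : IsOpen I) (hIc : Convex ℝ I)
    {g : ℝ → ℝ} (hg : ContDiffOn ℝ (⊤ : ℕ∞) g I)
    (h3 : ∀ y ∈ I, deriv (deriv (deriv g)) y = 0) :
    ∃ a b c : ℝ, ∀ y ∈ I, g y = a * y ^ 2 + b * y + c := by
  rcases I.eq_empty_or_nonempty with rfl | ⟨y0, hy0⟩
  · exact ⟨0, 0, 0, by simp⟩
  have H0 := (contDiffOn_infty_iff_deriv_of_isOpen hIo).mp hg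
  have H1 := (contDiffOn_infty_iff_deriv_of_isOpen hIo).mp H0.2
  have H2 := (contDiffOn_infty_iff_deriv_of_isOpen hIo).mp H1.2
  have hd0 : ∀ y ∈ I, HasDerivAt g (deriv g y) y := fun y hy =>
    (H0.1.differentiableAt (hIo.mem_nhds hy)).hasDerivAt
  have hd1 : ∀ y ∈ I, HasDerivAt (deriv g) (deriv (deriv g) y) y := fun y hy =>
    (H1.1.differentiableAt (hIo.mem_nhds hy)).hasDerivAt
  have hd2 : ∀ y ∈ I, HasDerivAt (deriv (deriv g)) 0 y := fun y hy => by
    have := (H2.1.differentiableAt (hIo.mem_nhds hy)).hasDerivAt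
    rwa [h3 y hy] at this
  -- second derivative is constant K
  set K := deriv (deriv g) y0 with hK
  have hc2 : ∀ y ∈ I, deriv (deriv g) y = K :=
    fun y hy => const_of_hasDerivAt_zero hIc hd2 y hy y0 hy0
  -- first derivative minus K*y is constant L
  have hd1' : ∀ y ∈ I, HasDerivAt (fun y => deriv g y - K * y) 0 y := by
    intro y hy
    have := (hd1 y hy).sub ((hasDerivAt_id y).const_mul K)
    exact this.congr_deriv (by rw [hc2 y hy]; ring)
  set L := deriv g y0 - K * y0 with hL
  have hc1 : ∀ y ∈ I, deriv g y = K * y + L := by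
    intro y hy
    have := const_of_hasDerivAt_zero hIc hd1' y hy y0 hy0
    linarith
  -- g minus quadratic is constant
  have hd0' : ∀ y ∈ I, HasDerivAt (fun y => g y - ((K/2) * y ^ 2 + L * y)) 0 y := by
    intro y hy
    have hq : HasDerivAt (fun y : ℝ => (K/2) * y ^ 2 + L * y)
        ((K/2) * (2 * y ^ 1) + L * 1) y :=
      ((hasDerivAt_pow 2 y).const_mul (K/2)).add ((hasDerivAt_id y).const_mul L)
    have := (hd0 y hy).sub hq
    have he : deriv g y - ((K/2) * (2 * y ^ 1) + L * 1) = 0 := by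
      rw [hc1 y hy]; ring
    rwa [he] at this
  refine ⟨K/2, L, g y0 - ((K/2) * y0 ^ 2 + L * y0), fun y hy => ?_⟩
  have := const_of_hasDerivAt_zero hIc hd0' y hy y0 hy0
  linarith

/-- On a product of open intervals where `f` and `f_y` are nowhere zero, the invariant
`J31(f) = f²·f_yyy/f_y³` vanishes identically if and only if
`f(y,u) = α(u)·y² + β(u)·y + γ(u)` for some smooth functions `α, β, γ` of `u`. -/
theorem J31_eq_zero_iff_quadratic (I J : Set ℝ)
    (hIo : IsOpen I) (hIc : Convex ℝ I) (hJo : IsOpen J) (hJc : Convex ℝ J)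
    (f : ℝ → ℝ → ℝ)
    (hf : ContDiffOn ℝ (⊤ : ℕ∞) (fun p : ℝ × ℝ => f p.1 p.2) (I ×ˢ J))
    (hf0 : ∀ y ∈ I, ∀ u ∈ J, f y u ≠ 0)
    (hfy : ∀ y ∈ I, ∀ u ∈ J, pd1 f y u ≠ 0) :
    (∀ y ∈ I, ∀ u ∈ J, J31 f y u = 0) ↔
      ∃ α β γ : ℝ → ℝ, ContDiffOn ℝ (⊤ : ℕ∞) α J ∧ ContDiffOn ℝ (⊤ : ℕ∞) β J ∧
        ContDiffOn ℝ (⊤ : ℕ∞) γ J ∧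
        ∀ y ∈ I, ∀ u ∈ J, f y u = α u * y ^ 2 + β u * y + γ u := by

  constructor
  · -- forward direction
    intro hJ31
    by_cases hIne : I.Nonempty
    · obtain ⟨y0, hy0⟩ := hIne
      obtain ⟨ε, hε, hball⟩ := Metric.isOpen_iff.mp hIo y0 hy0
      set y1 := y0 + ε/2 with hy1def
      set y2 := y0 - ε/2 with hy2def
      have hy1 : y1 ∈ I := by
        apply hball
        rw [Metric.mem_ball, Real.dist_eq, hy1def,
          show y0 + ε/2 - y0 = ε/2 by ring, abs_of_pos (by linarith)]
        linarith
      have hy2 : y2 ∈ I := by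
        apply hball
        rw [Metric.mem_ball, Real.dist_eq, hy2def,
          show y0 - ε/2 - y0 = -(ε/2) by ring, abs_neg, abs_of_pos (by linarith)]
        linarith
      have h01 : y0 - y1 ≠ 0 := by rw [hy1def]; intro h; linarith
      have h02 : y0 - y2 ≠ 0 := by rw [hy2def]; intro h; linarith
      have h10 : y1 - y0 ≠ 0 := by rw [hy1def]; intro h; linarith
      have h12 : y1 - y2 ≠ 0 := by rw [hy1def, hy2def]; intro h; linarith
      have h20 : y2 - y0 ≠ 0 := by rw [hy2def]; intro h; linarith
      have h21 : y2 - y1 ≠ 0 := by rw [hy1def, hy2def]; intro h; linarith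
      -- pointwise-in-u quadratic structure
      have key : ∀ u ∈ J, ∃ a b c : ℝ, ∀ y ∈ I, f y u = a * y ^ 2 + b * y + c := by
        intro u hu
        have hg : ContDiffOn ℝ (⊤ : ℕ∞) (fun y => f y u) I := by
          have := hf.comp ((contDiff_id.prodMk contDiff_const).contDiffOn
            (s := I)) (fun y hy => Set.mk_mem_prod hy hu)
          exact this
        apply quadratic_of_deriv3_zero hIo hIc hg
        intro y hy
        have h0 := hJ31 y hy u hu
        have hne : (pd1 f y u) ^ 3 ≠ 0 := pow_ne_zero _ (hfy y hy u hu)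
        have hne2 : f y u ^ 2 ≠ 0 := pow_ne_zero _ (hf0 y hy u hu)
        have hD : pd1 (pd1 (pd1 f)) y u = 0 := by
          rw [J31] at h0
          rcases div_eq_zero_iff.mp h0 with h | h
          · rcases mul_eq_zero.mp h with h | h
            · exact absurd h hne2
            · exact h
          · exact absurd h hne
        exact hD
      -- Lagrange interpolation coefficients
      refine ⟨fun u => f y0 u * (1/((y0-y1)*(y0-y2))) + f y1 u * (1/((y1-y0)*(y1-y2)))
            + f y2 u * (1/((y2-y0)*(y2-y1))),
          fun u => f y0 u * (-(y1+y2)/((y0-y1)*(y0-y2))) + f y1 u * (-(y0+y2)/((y1-y0)*(y1-y2)))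
            + f y2 u * (-(y0+y1)/((y2-y0)*(y2-y1))),
          fun u => f y0 u * (y1*y2/((y0-y1)*(y0-y2))) + f y1 u * (y0*y2/((y1-y0)*(y1-y2)))
            + f y2 u * (y0*y1/((y2-y0)*(y2-y1))), ?_, ?_, ?_, ?_⟩
      case _ =>
        have hfi : ∀ yi ∈ I, ContDiffOn ℝ (⊤ : ℕ∞) (fun u => f yi u) J := fun yi hyi =>
          hf.comp ((contDiff_const.prodMk contDiff_id).contDiffOn (s := J))
            (fun u hu => Set.mk_mem_prod hyi hu)
        exact (((hfi y0 hy0).mul contDiffOn_const).add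
          ((hfi y1 hy1).mul contDiffOn_const)).add ((hfi y2 hy2).mul contDiffOn_const)
      case _ =>
        have hfi : ∀ yi ∈ I, ContDiffOn ℝ (⊤ : ℕ∞) (fun u => f yi u) J := fun yi hyi =>
          hf.comp ((contDiff_const.prodMk contDiff_id).contDiffOn (s := J))
            (fun u hu => Set.mk_mem_prod hyi hu)
        exact (((hfi y0 hy0).mul contDiffOn_const).add
          ((hfi y1 hy1).mul contDiffOn_const)).add ((hfi y2 hy2).mul contDiffOn_const)
      case _ =>
        have hfi : ∀ yi ∈ I, ContDiffOn ℝ (⊤ : ℕ∞) (fun u => f yi u) J := fun yi hyi =>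
          hf.comp ((contDiff_const.prodMk contDiff_id).contDiffOn (s := J))
            (fun u hu => Set.mk_mem_prod hyi hu)
        exact (((hfi y0 hy0).mul contDiffOn_const).add
          ((hfi y1 hy1).mul contDiffOn_const)).add ((hfi y2 hy2).mul contDiffOn_const)
      case _ =>
        intro y hy u hu
        obtain ⟨a, b, c, hq⟩ := key u hu
        simp only [hq y hy, hq y0 hy0, hq y1 hy1, hq y2 hy2]
        field_simp
        ring
    · exact ⟨0, 0, 0, contDiffOn_const, contDiffOn_const, contDiffOn_const,
        fun y hy => absurd ⟨y, hy⟩ hIne⟩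
  · -- backward direction
    rintro ⟨α, β, γ, hα, hβ, hγ, heq⟩ y hy u hu
    have h1 : ∀ s ∈ I, pd1 f s u = 2 * α u * s + β u := by
      intro s hs
      have hev : (fun t => f t u) =ᶠ[nhds s] fun t => α u * t ^ 2 + β u * t + γ u :=
        Filter.eventually_of_mem (hIo.mem_nhds hs) (fun t ht => heq t ht u hu)
      have hq : HasDerivAt (fun t : ℝ => α u * t ^ 2 + β u * t + γ u)
          (α u * (2 * s ^ 1) + β u * 1) s :=
        (((hasDerivAt_pow 2 s).const_mul (α u)).add
          ((hasDerivAt_id s).const_mul (β u))).add_const (γ u)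
      rw [show pd1 f s u = deriv (fun t => f t u) s from rfl, hev.deriv_eq, hq.deriv]
      ring
    have h2 : ∀ s ∈ I, pd1 (pd1 f) s u = 2 * α u := by
      intro s hs
      have hev : (fun t => pd1 f t u) =ᶠ[nhds s] fun t => 2 * α u * t + β u :=
        Filter.eventually_of_mem (hIo.mem_nhds hs) (fun t ht => h1 t ht)
      have hq : HasDerivAt (fun t : ℝ => 2 * α u * t + β u) (2 * α u * 1) s :=
        ((hasDerivAt_id s).const_mul (2 * α u)).add_const (β u)
      rw [show pd1 (pd1 f) s u = deriv (fun t => pd1 f t u) s from rfl, hev.deriv_eq, hq.deriv]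
      ring
    have h3 : pd1 (pd1 (pd1 f)) y u = 0 := by
      have hev : (fun t => pd1 (pd1 f) t u) =ᶠ[nhds y] fun _ => 2 * α u :=
        Filter.eventually_of_mem (hIo.mem_nhds hy) (fun t ht => h2 t ht)
      rw [show pd1 (pd1 (pd1 f)) y u = deriv (fun t => pd1 (pd1 f) t u) y from rfl,
        hev.deriv_eq, deriv_const]
    rw [J31]
    simp [h3]
end

section
/- Let n ≥ 1 be a natural number, let I, J ⊆ ℝ be open intervals, and let f : I × J → ℝ be smooth with f(y,u) > 0, f_y(y,u) ≠ 0 and f_u(y,u) ≠ 0 for all (y,u) ∈ I × J. Then the five conditions J21(f) = (n−1)/n, J22(f) = 1, J31(f) = (n² − 3n + 2)/n², J32(f) = (n−1)/n and J33(f) = 0 hold identically on I × J if and only if there exist a smooth nowhere-zero function α : J → ℝ and a real constant c such that f(y,u) = (α(u)·(y − c))ⁿ for all (y,u) ∈ I × J. (Equivalently, the equation y'' + f(y,u) = 0 is locally equivalent to y'' + (α(u)·y)ⁿ = 0 with respect to feedback transformations.) -/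
open Real Filter Set


lemma deriv_congr_open {s : Set ℝ} (hs : IsOpen s) {x : ℝ} (hx : x ∈ s)
    {g G : ℝ → ℝ} (h : ∀ t ∈ s, g t = G t) : deriv g x = deriv G x := by
  apply Filter.EventuallyEq.deriv_eq
  exact Filter.eventually_of_mem (hs.mem_nhds hx) h

lemma const_of_hasDerivAt_zero_s17 {s : Set ℝ} (hso : IsOpen s) (hsc : Convex ℝ s)
    {g : ℝ → ℝ} (hg : ∀ x ∈ s, HasDerivAt g 0 x) {x y : ℝ} (hx : x ∈ s) (hy : y ∈ s) :
    g x = g y := by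
  apply hsc.is_const_of_fderivWithin_eq_zero
    (fun z hz => (hg z hz).differentiableAt.differentiableWithinAt) ?_ hx hy
  intro z hz
  rw [fderivWithin_of_isOpen hso hz]
  have : HasFDerivAt g (ContinuousLinearMap.smulRight (1 : ℝ →L[ℝ] ℝ) (0:ℝ)) z :=
    (hg z hz).hasFDerivAt
  rw [this.fderiv]
  ext t
  simp

lemma slice1 {I J : Set ℝ} {f : ℝ → ℝ → ℝ}
    (hf : ContDiffOn ℝ (⊤ : ℕ∞) (fun p : ℝ × ℝ => f p.1 p.2) (I ×ˢ J))
    {u : ℝ} (hu : u ∈ J) : ContDiffOn ℝ (⊤ : ℕ∞) (fun y => f y u) I := by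
  have : (fun y => f y u) = (fun p : ℝ × ℝ => f p.1 p.2) ∘ (fun y => (y, u)) := rfl
  rw [this]
  exact hf.comp ((contDiff_id.prodMk contDiff_const).contDiffOn) (fun y hy => ⟨hy, hu⟩)

lemma slice2 {I J : Set ℝ} {f : ℝ → ℝ → ℝ}
    (hf : ContDiffOn ℝ (⊤ : ℕ∞) (fun p : ℝ × ℝ => f p.1 p.2) (I ×ˢ J))
    {y : ℝ} (hy : y ∈ I) : ContDiffOn ℝ (⊤ : ℕ∞) (fun u => f y u) J := by
  have : (fun u => f y u) = (fun p : ℝ × ℝ => f p.1 p.2) ∘ (fun u => (y, u)) := rfl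
  rw [this]
  exact hf.comp ((contDiff_const.prodMk contDiff_id).contDiffOn) (fun v hv => ⟨hy, hv⟩)

lemma deriv_smooth_of_top {s : Set ℝ} (hs : IsOpen s) {g : ℝ → ℝ}
    (hg : ContDiffOn ℝ (⊤ : ℕ∞) g s) : ContDiffOn ℝ (⊤ : ℕ∞) (deriv g) s :=
  ((contDiffOn_infty_iff_deriv_of_isOpen hs).1 hg).2

lemma hasDerivAt_of_contDiffOn {s : Set ℝ} (hs : IsOpen s) {g : ℝ → ℝ}
    (hg : ContDiffOn ℝ (⊤ : ℕ∞) g s) {x : ℝ} (hx : x ∈ s) :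
    HasDerivAt g (deriv g x) x := by
  have := (hg.contDiffAt (hs.mem_nhds hx)).differentiableAt (by simp)
  exact this.hasDerivAt

lemma affine_root (n : ℕ) (hn : 1 ≤ n) {I : Set ℝ} (hIo : IsOpen I) (hIc : Convex ℝ I)
    {g : ℝ → ℝ} (hg : ContDiffOn ℝ (⊤ : ℕ∞) g I) (hpos : ∀ x ∈ I, 0 < g x)
    (hJ : ∀ x ∈ I, g x * deriv (deriv g) x = (((n:ℝ)-1)/n) * (deriv g x)^2) :
    ∀ x ∈ I, ∀ z ∈ I,
      g x ^ ((n:ℝ)⁻¹) =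
        g z ^ ((n:ℝ)⁻¹) + (deriv g z * (n:ℝ)⁻¹ * g z ^ ((n:ℝ)⁻¹ - 1)) * (x - z) := by
  have hn0 : (n:ℝ) ≠ 0 := Nat.cast_ne_zero.2 (by omega)
  set c : ℝ := (n:ℝ)⁻¹ with hc
  set e : ℝ := (n:ℝ)⁻¹ - 1 with he
  set q : ℝ → ℝ := fun x => deriv g x * c * g x ^ e with hq
  have hgd : ∀ x ∈ I, HasDerivAt g (deriv g x) x := fun x hx =>
    hasDerivAt_of_contDiffOn hIo hg hx
  have hp : ∀ x ∈ I, HasDerivAt (fun t => g t ^ c) (q x) x := fun x hx =>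
    (hgd x hx).rpow_const (Or.inl (hpos x hx).ne')
  have hq0 : ∀ x ∈ I, HasDerivAt q 0 x := by
    intro x hx
    have h1 : HasDerivAt (fun t => deriv g t * c) (deriv (deriv g) x * c) x :=
      (hasDerivAt_of_contDiffOn hIo (deriv_smooth_of_top hIo hg) hx).mul_const c
    have h2 : HasDerivAt (fun t => g t ^ e) (deriv g x * e * g x ^ (e - 1)) x :=
      (hgd x hx).rpow_const (Or.inl (hpos x hx).ne')
    have h3 := h1.mul h2
    have hval : deriv (deriv g) x * c * g x ^ e
        + deriv g x * c * (deriv g x * e * g x ^ (e - 1)) = 0 := by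
      have hge : g x ^ e = g x ^ (e-1) * g x := by
        have h := Real.rpow_add_one (ne_of_gt (hpos x hx)) (e-1)
        have h2 : g x ^ (e - 1) * g x = g x ^ e := by simpa using h.symm
        exact h2.symm
      rw [hge]
      have hkey := hJ x hx
      have hne : ((n:ℝ)-1)/(n:ℝ) + e = 0 := by
        rw [he]; field_simp; ring
      have : deriv (deriv g) x * c * (g x ^ (e-1) * g x)
          + deriv g x * c * (deriv g x * e * g x ^ (e - 1))
          = c * g x ^ (e-1) * ((((n:ℝ)-1)/n) * (deriv g x)^2 + e * (deriv g x)^2)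
          := by
        rw [← hkey]; ring
      rw [this, show (((n:ℝ)-1)/n) * (deriv g x)^2 + e * (deriv g x)^2
          = ((((n:ℝ)-1)/n) + e) * (deriv g x)^2 by ring, hne]
      ring
    exact hval ▸ h3
  intro x hx z hz
  have hlin : ∀ w ∈ I, HasDerivAt (fun t => g t ^ c - q z * t) 0 w := by
    intro w hw
    have : HasDerivAt (fun t => g t ^ c - q z * t) (q w - q z * 1) w :=
      (hp w hw).sub ((hasDerivAt_id w).const_mul (q z))
    have hqw : q w = q z := const_of_hasDerivAt_zero_s17 hIo hIc hq0 hw hz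
    simpa [hqw] using this
  have := const_of_hasDerivAt_zero_s17 hIo hIc hlin hx hz
  have hqz : q z = deriv g z * c * g z ^ e := rfl
  rw [← hqz]
  linarith [this]

set_option maxHeartbeats 1000000

/-- On a product of open intervals where `f > 0` and `f_y, f_u` are nowhere zero, the five
conditions `J21(f) = (n−1)/n`, `J22(f) = 1`, `J31(f) = (n² − 3n + 2)/n²`,
`J32(f) = (n−1)/n`, `J33(f) = 0` hold identically if and only if
`f(y,u) = (α(u)·(y − c))ⁿ` for some smooth nowhere-zero `α` and constant `c`. -/
theorem power_normal_form_iff (n : ℕ) (hn : 1 ≤ n) (I J : Set ℝ)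
    (hIo : IsOpen I) (hIc : Convex ℝ I) (hJo : IsOpen J) (hJc : Convex ℝ J)
    (f : ℝ → ℝ → ℝ)
    (hf : ContDiffOn ℝ (⊤ : ℕ∞) (fun p : ℝ × ℝ => f p.1 p.2) (I ×ˢ J))
    (hfpos : ∀ y ∈ I, ∀ u ∈ J, 0 < f y u)
    (hfy : ∀ y ∈ I, ∀ u ∈ J, pd1 f y u ≠ 0)
    (hfu : ∀ y ∈ I, ∀ u ∈ J, pd2 f y u ≠ 0) :
    (∀ y ∈ I, ∀ u ∈ J,
        J21 f y u = ((n : ℝ) - 1) / n ∧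
        J22 f y u = 1 ∧
        J31 f y u = ((n : ℝ) ^ 2 - 3 * n + 2) / (n : ℝ) ^ 2 ∧
        J32 f y u = ((n : ℝ) - 1) / n ∧
        J33 f y u = 0) ↔
      ∃ (α : ℝ → ℝ) (c : ℝ), ContDiffOn ℝ (⊤ : ℕ∞) α J ∧ (∀ u ∈ J, α u ≠ 0) ∧
        ∀ y ∈ I, ∀ u ∈ J, f y u = (α u * (y - c)) ^ n := by
  constructor
  · intro H
    rcases Set.eq_empty_or_nonempty I with hIe | ⟨y₀, hy₀⟩
    · exact ⟨fun _ => 1, 0, contDiffOn_const, fun _ _ => one_ne_zero,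
        fun y hy => absurd hy (by simp [hIe])⟩
    rcases Set.eq_empty_or_nonempty J with hJe | ⟨u₀, hu₀⟩
    · exact ⟨fun _ => 1, 0, contDiffOn_const, fun u hu => absurd hu (by simp [hJe]),
        fun y _ u hu => absurd hu (by simp [hJe])⟩
    have hn0 : (n:ℝ) ≠ 0 := Nat.cast_ne_zero.2 (by omega)
    -- a second point in I
    obtain ⟨ε, hε, hball⟩ := Metric.isOpen_iff.1 hIo y₀ hy₀
    obtain ⟨y₁, hy₁def⟩ : ∃ y₁ : ℝ, y₁ = y₀ + ε/2 := ⟨_, rfl⟩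
    have hy₁ : y₁ ∈ I := by
      apply hball
      simp only [Metric.mem_ball, Real.dist_eq, hy₁def]
      rw [show y₀ + ε/2 - y₀ = ε/2 by ring, abs_of_pos (by linarith)]
      linarith
    have hy10 : y₁ - y₀ ≠ 0 := by rw [hy₁def]; intro hc; absurd hε; linarith
    -- the n-th root is affine in y
    have haff : ∀ u ∈ J, ∀ x ∈ I, ∀ z ∈ I,
        f x u ^ ((n:ℝ)⁻¹) = f z u ^ ((n:ℝ)⁻¹)
          + (pd1 f z u * (n:ℝ)⁻¹ * f z u ^ ((n:ℝ)⁻¹ - 1)) * (x - z) := by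
      intro u hu
      refine affine_root n hn hIo hIc (slice1 hf hu) (fun x hx => hfpos x hx u hu) ?_
      intro x hx
      have h21 := (H x hx u hu).1
      simp only [J21] at h21
      rw [div_eq_iff (pow_ne_zero 2 (hfy x hx u hu))] at h21
      exact h21
    obtain ⟨a, ha_def⟩ : ∃ a : ℝ → ℝ,
        a = fun u => pd1 f y₀ u * (n:ℝ)⁻¹ * f y₀ u ^ ((n:ℝ)⁻¹ - 1) := ⟨_, rfl⟩
    obtain ⟨b, hb_def⟩ : ∃ b : ℝ → ℝ,
        b = fun u => f y₀ u ^ ((n:ℝ)⁻¹) - a u * y₀ := ⟨_, rfl⟩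
    have hhab : ∀ u ∈ J, ∀ x ∈ I, f x u ^ ((n:ℝ)⁻¹) = a u * x + b u := by
      intro u hu x hx
      have hx0 := haff u hu x hx y₀ hy₀
      rw [hx0]
      simp only [ha_def, hb_def]
      ring
    have ha0 : ∀ u ∈ J, a u ≠ 0 := by
      intro u hu
      rw [ha_def]
      exact mul_ne_zero (mul_ne_zero (hfy y₀ hy₀ u hu) (inv_ne_zero hn0))
        (Real.rpow_pos_of_pos (hfpos y₀ hy₀ u hu) _).ne'
    have hposH : ∀ x ∈ I, ∀ u ∈ J, 0 < a u * x + b u := by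
      intro x hx u hu
      rw [← hhab u hu x hx]
      exact Real.rpow_pos_of_pos (hfpos x hx u hu) _
    have hf_form : ∀ x ∈ I, ∀ u ∈ J, f x u = (a u * x + b u)^n := by
      intro x hx u hu
      have h1 : (f x u ^ ((n:ℝ)⁻¹)) ^ (n:ℕ) = f x u := by
        rw [← Real.rpow_natCast (f x u ^ ((n:ℝ)⁻¹)) n,
          ← Real.rpow_mul (hfpos x hx u hu).le, inv_mul_cancel₀ hn0, Real.rpow_one]
      rw [← h1, hhab u hu x hx]
    have ha_sm : ContDiffOn ℝ (⊤ : ℕ∞) a J := by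
      have h2pt : ∀ u ∈ J, a u = (f y₁ u ^ ((n:ℝ)⁻¹) - f y₀ u ^ ((n:ℝ)⁻¹)) / (y₁ - y₀) := by
        intro u hu
        rw [hhab u hu y₁ hy₁, hhab u hu y₀ hy₀]
        field_simp
        ring
      refine ContDiffOn.congr ?_ h2pt
      exact (((slice2 hf hy₁).rpow_const_of_ne (fun u hu => (hfpos y₁ hy₁ u hu).ne')).sub
        ((slice2 hf hy₀).rpow_const_of_ne (fun u hu => (hfpos y₀ hy₀ u hu).ne'))).div_const _
    have hb_sm : ContDiffOn ℝ (⊤ : ℕ∞) b J := by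
      rw [hb_def]
      exact ((slice2 hf hy₀).rpow_const_of_ne (fun u hu => (hfpos y₀ hy₀ u hu).ne')).sub
        (ha_sm.mul contDiffOn_const)
    have hau : ∀ u ∈ J, HasDerivAt a (deriv a u) u :=
      fun u hu => hasDerivAt_of_contDiffOn hJo ha_sm hu
    have hbu : ∀ u ∈ J, HasDerivAt b (deriv b u) u :=
      fun u hu => hasDerivAt_of_contDiffOn hJo hb_sm hu
    have hpd1 : ∀ s ∈ I, ∀ v ∈ J, pd1 f s v = ↑n * (a v * s + b v)^(n-1) * a v := by
      intro s hs v hv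
      have hb1 : HasDerivAt (fun t => a v * t + b v) (a v) s := by
        simpa using ((hasDerivAt_id s).const_mul (a v)).add_const (b v)
      have hp := hb1.pow n
      have hcongr : deriv (fun t => f t v) s = deriv (fun t => (a v * t + b v)^n) s :=
        deriv_congr_open hIo hs (fun t ht => hf_form t ht v hv)
      calc pd1 f s v = deriv (fun t => f t v) s := rfl
      _ = _ := by rw [hcongr]; exact hp.deriv
    have hpd2 : ∀ v ∈ J, pd2 f y₀ v
        = ↑n * (a v * y₀ + b v)^(n-1) * (deriv a v * y₀ + deriv b v) := by
      intro v hv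
      have hb1 : HasDerivAt (fun w => a w * y₀ + b w) (deriv a v * y₀ + deriv b v) v :=
        ((hau v hv).mul_const y₀).add (hbu v hv)
      have hp := hb1.pow n
      have hcongr : deriv (f y₀) v = deriv (fun w => (a w * y₀ + b w)^n) v :=
        deriv_congr_open hJo hv (fun w hw => hf_form y₀ hy₀ w hw)
      calc pd2 f y₀ v = deriv (f y₀) v := rfl
      _ = _ := by rw [hcongr]; exact hp.deriv
    have hpd21 : ∀ u ∈ J, pd2 (pd1 f) y₀ u
        = (↑n * (↑(n-1) * (a u * y₀ + b u)^(n-1-1) * (deriv a u * y₀ + deriv b u))) * a u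
          + (↑n * (a u * y₀ + b u)^(n-1)) * deriv a u := by
      intro u hu
      have hb1 : HasDerivAt (fun w => a w * y₀ + b w) (deriv a u * y₀ + deriv b u) u :=
        ((hau u hu).mul_const y₀).add (hbu u hu)
      have hT := hb1.pow (n-1)
      have hG := (HasDerivAt.const_mul (n:ℝ) hT).mul (hau u hu)
      have hcongr : deriv (fun w => pd1 f y₀ w) u
          = deriv (fun w => ↑n * (a w * y₀ + b w)^(n-1) * a w) u :=
        deriv_congr_open hJo hu (fun w hw => hpd1 y₀ hy₀ w hw)
      calc pd2 (pd1 f) y₀ u = deriv (fun w => pd1 f y₀ w) u := rfl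
      _ = _ := by rw [hcongr]; exact hG.deriv
    have habk : ∀ u ∈ J, deriv a u * b u = a u * deriv b u := by
      intro u hu
      have h22 := (H y₀ hy₀ u hu).2.1
      simp only [J22] at h22
      rw [div_eq_one_iff_eq (mul_ne_zero (hfy y₀ hy₀ u hu) (hfu y₀ hy₀ u hu))] at h22
      rw [hf_form y₀ hy₀ u hu, hpd1 y₀ hy₀ u hu, hpd2 u hu, hpd21 u hu] at h22
      have hH : a u * y₀ + b u ≠ 0 := (hposH y₀ hy₀ u hu).ne'
      rcases Nat.lt_or_ge n 2 with h2 | h2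
      · have hn1 : n = 1 := by omega
        subst hn1
        norm_num at h22
        linear_combination h22
      · obtain ⟨k, rfl⟩ : ∃ k, n = k + 2 := ⟨n - 2, by omega⟩
        have e1 : k + 2 - 1 = k + 1 := rfl
        have e2 : k + 2 - 1 - 1 = k := rfl
        rw [e1, show k+1-1 = k from rfl] at h22
        push_cast at h22
        have hkey : (a u * y₀ + b u) * deriv a u
            = a u * (deriv a u * y₀ + deriv b u) := by
          have h3 : ((k:ℝ)+2) * (a u * y₀ + b u)^(2*k+2) *
              ((a u * y₀ + b u) * deriv a u - a u * (deriv a u * y₀ + deriv b u)) = 0 := by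
            linear_combination h22
          have h4 := (mul_eq_zero.mp h3).resolve_left
            (mul_ne_zero (by positivity) (pow_ne_zero _ hH))
          linarith
        linear_combination hkey
    have hr : ∀ u ∈ J, HasDerivAt (fun v => b v / a v) 0 u := by
      intro u hu
      have hd := (hbu u hu).div (hau u hu) (ha0 u hu)
      have hval : (deriv b u * a u - b u * deriv a u) / a u ^ 2 = 0 := by
        rw [div_eq_zero_iff]; left; linarith [habk u hu]
      exact hval ▸ hd
    refine ⟨a, -(b u₀ / a u₀), ha_sm, ha0, ?_⟩
    intro y hy u hu
    have hcst : b u / a u = b u₀ / a u₀ := const_of_hasDerivAt_zero_s17 hJo hJc hr hu hu₀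
    rw [div_eq_iff (ha0 u hu)] at hcst
    rw [hf_form y hy u hu, hcst]
    congr 1
    ring
  · rintro ⟨α, c, hα, hα0, hform⟩
    intro y hy u hu
    have hn0 : (n:ℝ) ≠ 0 := Nat.cast_ne_zero.2 (by omega)
    have hA : α u ≠ 0 := hα0 u hu
    have hY : y - c ≠ 0 := by
      intro hc
      have hp := hfpos y hy u hu
      rw [hform y hy u hu, hc, mul_zero, zero_pow (by omega : n ≠ 0)] at hp
      exact lt_irrefl 0 hp
    have hAY : α u * (y - c) ≠ 0 := mul_ne_zero hA hY
    obtain ⟨β, hβdef⟩ : ∃ β : ℝ → ℝ, β = deriv α := ⟨_, rfl⟩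
    have hαd : ∀ v ∈ J, HasDerivAt α (β v) v := by
      rw [hβdef]; exact fun v hv => hasDerivAt_of_contDiffOn hJo hα hv
    have hβ_sm : ContDiffOn ℝ (⊤ : ℕ∞) β J := by
      rw [hβdef]; exact deriv_smooth_of_top hJo hα
    have hβd : ∀ v ∈ J, HasDerivAt β (deriv β v) v :=
      fun v hv => hasDerivAt_of_contDiffOn hJo hβ_sm hv
    have hbase : ∀ (s : ℝ) (v : ℝ), HasDerivAt (fun t => α v * (t - c)) (α v) s := by
      intro s v
      simpa using ((hasDerivAt_id s).sub_const c).const_mul (α v)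
    -- pure y-derivatives
    have hpd1 : ∀ s ∈ I, ∀ v ∈ J, pd1 f s v = ↑n * (α v * (s - c))^(n-1) * α v := by
      intro s hs v hv
      have hp := (hbase s v).pow n
      have hcongr : deriv (fun t => f t v) s = deriv (fun t => (α v * (t - c))^n) s :=
        deriv_congr_open hIo hs (fun t ht => hform t ht v hv)
      calc pd1 f s v = deriv (fun t => f t v) s := rfl
      _ = _ := by rw [hcongr]; exact hp.deriv
    have hpd11 : ∀ s ∈ I, ∀ v ∈ J, pd1 (pd1 f) s v
        = ↑n * (↑(n-1) * (α v * (s - c))^(n-1-1) * α v) * α v := by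
      intro s hs v hv
      have hp := (HasDerivAt.const_mul (n:ℝ) ((hbase s v).pow (n-1))).mul_const (α v)
      have hcongr : deriv (fun t => pd1 f t v) s
          = deriv (fun t => ↑n * (α v * (t - c))^(n-1) * α v) s :=
        deriv_congr_open hIo hs (fun t ht => hpd1 t ht v hv)
      calc pd1 (pd1 f) s v = deriv (fun t => pd1 f t v) s := rfl
      _ = _ := by rw [hcongr]; exact hp.deriv
    have hpd111 : pd1 (pd1 (pd1 f)) y u
        = ↑n * (↑(n-1) * (↑(n-1-1) * (α u * (y - c))^(n-1-1-1) * α u) * α u) * α u := by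
      have hp := (HasDerivAt.const_mul (n:ℝ)
        ((HasDerivAt.const_mul ((n-1 : ℕ):ℝ) ((hbase y u).pow (n-1-1))).mul_const (α u))).mul_const (α u)
      have hcongr : deriv (fun t => pd1 (pd1 f) t u) y
          = deriv (fun t => ↑n * (↑(n-1) * (α u * (t - c))^(n-1-1) * α u) * α u) y :=
        deriv_congr_open hIo hy (fun t ht => hpd11 t ht u hu)
      calc pd1 (pd1 (pd1 f)) y u = deriv (fun t => pd1 (pd1 f) t u) y := rfl
      _ = _ := by rw [hcongr]; exact hp.deriv
    -- u-derivatives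
    have hpd2 : ∀ s ∈ I, ∀ v ∈ J, pd2 f s v
        = ↑n * (α v * (s - c))^(n-1) * (β v * (s - c)) := by
      intro s hs v hv
      have hp := ((hαd v hv).mul_const (s - c)).pow n
      have hcongr : deriv (f s) v = deriv (fun w => (α w * (s - c))^n) v :=
        deriv_congr_open hJo hv (fun w hw => hform s hs w hw)
      calc pd2 f s v = deriv (f s) v := rfl
      _ = _ := by rw [hcongr]; exact hp.deriv
    have hB : β u ≠ 0 := by
      intro hB0
      apply hfu y hy u hu
      rw [hpd2 y hy u hu, hB0]
      ring
    have hpd21 : ∀ s ∈ I, ∀ v ∈ J, pd2 (pd1 f) s v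
        = ↑n * (↑(n-1) * (α v * (s - c))^(n-1-1) * (β v * (s - c))) * α v
          + ↑n * (α v * (s - c))^(n-1) * β v := by
      intro s hs v hv
      have hp := (HasDerivAt.const_mul (n:ℝ)
        (((hαd v hv).mul_const (s - c)).pow (n-1))).mul (hαd v hv)
      have hcongr : deriv (fun w => pd1 f s w) v
          = deriv (fun w => ↑n * (α w * (s - c))^(n-1) * α w) v :=
        deriv_congr_open hJo hv (fun w hw => hpd1 s hs w hw)
      calc pd2 (pd1 f) s v = deriv (fun w => pd1 f s w) v := rfl
      _ = _ := by rw [hcongr]; exact hp.deriv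
    have hpd211 : pd2 (pd1 (pd1 f)) y u
        = ↑n * (↑(n-1) * (↑(n-1-1) * (α u * (y - c))^(n-1-1-1) * (β u * (y - c))) * α u
              + ↑(n-1) * (α u * (y - c))^(n-1-1) * β u) * α u
          + ↑n * (↑(n-1) * (α u * (y - c))^(n-1-1) * α u) * β u := by
      have hp := (HasDerivAt.const_mul (n:ℝ)
        ((HasDerivAt.const_mul ((n-1 : ℕ):ℝ)
          (((hαd u hu).mul_const (y - c)).pow (n-1-1))).mul (hαd u hu))).mul (hαd u hu)
      have hcongr : deriv (fun w => pd1 (pd1 f) y w) u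
          = deriv (fun w => ↑n * (↑(n-1) * (α w * (y - c))^(n-1-1) * α w) * α w) u :=
        deriv_congr_open hJo hu (fun w hw => hpd11 y hy w hw)
      calc pd2 (pd1 (pd1 f)) y u = deriv (fun w => pd1 (pd1 f) y w) u := rfl
      _ = _ := by rw [hcongr]; exact hp.deriv
    have hpd22 : pd2 (pd2 f) y u
        = ↑n * (↑(n-1) * (α u * (y - c))^(n-1-1) * (β u * (y - c))) * (β u * (y - c))
          + ↑n * (α u * (y - c))^(n-1) * (deriv β u * (y - c)) := by
      have hp := (HasDerivAt.const_mul (n:ℝ)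
        (((hαd u hu).mul_const (y - c)).pow (n-1))).mul ((hβd u hu).mul_const (y - c))
      have hcongr : deriv (fun w => pd2 f y w) u
          = deriv (fun w => ↑n * (α w * (y - c))^(n-1) * (β w * (y - c))) u :=
        deriv_congr_open hJo hu (fun w hw => hpd2 y hy w hw)
      calc pd2 (pd2 f) y u = deriv (fun w => pd2 f y w) u := rfl
      _ = _ := by rw [hcongr]; exact hp.deriv
    have hpd221 : pd2 (pd2 (pd1 f)) y u
        = (↑n * (↑(n-1) * (↑(n-1-1) * (α u * (y - c))^(n-1-1-1) * (β u * (y - c)))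
                * (β u * (y - c))
              + ↑(n-1) * (α u * (y - c))^(n-1-1) * (deriv β u * (y - c))) * α u
          + ↑n * (↑(n-1) * (α u * (y - c))^(n-1-1) * (β u * (y - c))) * β u)
          + (↑n * (↑(n-1) * (α u * (y - c))^(n-1-1) * (β u * (y - c))) * β u
              + ↑n * (α u * (y - c))^(n-1) * deriv β u) := by
      have hp := ((HasDerivAt.const_mul (n:ℝ)
          ((HasDerivAt.const_mul ((n-1 : ℕ):ℝ)
            (((hαd u hu).mul_const (y - c)).pow (n-1-1))).mul
              ((hβd u hu).mul_const (y - c)))).mul (hαd u hu)).add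
        ((HasDerivAt.const_mul (n:ℝ)
          (((hαd u hu).mul_const (y - c)).pow (n-1))).mul (hβd u hu))
      have hcongr : deriv (fun w => pd2 (pd1 f) y w) u
          = deriv (fun w => ↑n * (↑(n-1) * (α w * (y - c))^(n-1-1) * (β w * (y - c))) * α w
              + ↑n * (α w * (y - c))^(n-1) * β w) u :=
        deriv_congr_open hJo hu (fun w hw => hpd21 y hy w hw)
      calc pd2 (pd2 (pd1 f)) y u = deriv (fun w => pd2 (pd1 f) y w) u := rfl
      _ = _ := by rw [hcongr]; exact hp.deriv
    -- now the five identities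
    have hf' := hform y hy u hu
    have hp1 := hpd1 y hy u hu
    have hp11 := hpd11 y hy u hu
    have hp2 := hpd2 y hy u hu
    have hp21 := hpd21 y hy u hu
    set A := α u with hA_def
    set B := β u with hB_def
    set C := deriv β u with hC_def
    set Y := y - c with hY_def
    have hcases : n = 1 ∨ n = 2 ∨ ∃ k, n = k + 3 := by
      rcases Nat.lt_or_ge n 3 with h | h
      · interval_cases n
        · exact Or.inl rfl
        · exact Or.inr (Or.inl rfl)
      · exact Or.inr (Or.inr ⟨n - 3, by omega⟩)
    refine ⟨?_, ?_, ?_, ?_, ?_⟩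
    · simp only [J21]
      rw [hf', hp11, hp1]
      rcases hcases with rfl | rfl | ⟨k, rfl⟩
      · norm_num
      · norm_num
        try field_simp
        try ring
      · rw [show k+3-1-1 = k+1 by omega, show k+3-1 = k+2 by omega]
        push_cast
        field_simp
        ring
    · simp only [J22]
      rw [hf', hp21, hp1, hp2]
      rcases hcases with rfl | rfl | ⟨k, rfl⟩
      · norm_num
        try field_simp
        try ring
      · norm_num
        try field_simp
        try ring
      · rw [show k+3-1-1 = k+1 by omega, show k+3-1 = k+2 by omega]
        push_cast
        field_simp
        ring
    · simp only [J31]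
      rw [hf', hpd111, hp1]
      rcases hcases with rfl | rfl | ⟨k, rfl⟩
      · norm_num
      · norm_num
      · rw [show k+3-1-1-1 = k by omega, show k+3-1-1 = k+1 by omega,
          show k+3-1 = k+2 by omega]
        push_cast
        field_simp
        ring
    · simp only [J32]
      rw [hf', hpd211, hp1, hp2]
      rcases hcases with rfl | rfl | ⟨k, rfl⟩
      · norm_num
        try field_simp
        try ring
      · norm_num
        try field_simp
        try ring
      · rw [show k+3-1-1-1 = k by omega, show k+3-1-1 = k+1 by omega,
          show k+3-1 = k+2 by omega]
        push_cast
        field_simp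
        ring
    · simp only [J33, J22]
      rw [hf', hpd221, hp21, hpd22, hp2, hp1]
      rcases hcases with rfl | rfl | ⟨k, rfl⟩
      · norm_num
        try field_simp
        try ring
      · norm_num
        try field_simp
        try ring
      · rw [show k+3-1-1-1 = k by omega, show k+3-1-1 = k+1 by omega,
          show k+3-1 = k+2 by omega]
        push_cast
        field_simp
        ring
end

section
/- Let f : V → ℝ be smooth on an open set V ⊆ ℝ² with f, f_y and f_u nowhere zero on V. Set J22 = f·f_{yu}/(f_y·f_u), J33 = f²·f_{yuu}/(f_u²·f_y) − J22·f·f_{uu}/f_u², and J44 = f³·f_{yuuu}/(f_y·f_u³) − 3·J33·f·f_{uu}/f_u² − J22·f²·f_{uuu}/f_u³. Then, on V, (f/f_u)·∂_u(J33) = 2·J33 − J22·J33 + J44; i.e. ∇₂(J33) = 2·J33 − J22·J33 + J44. -/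
private lemma hasDerivAt_snd {V : Set (ℝ × ℝ)} (hV : IsOpen V) {g : ℝ → ℝ → ℝ}
    (hg : ContDiffOn ℝ (⊤ : ℕ∞) (fun p : ℝ × ℝ => g p.1 p.2) V) {y u : ℝ}
    (h : (y, u) ∈ V) :
    HasDerivAt (fun t => g y t)
      (fderiv ℝ (fun p : ℝ × ℝ => g p.1 p.2) (y, u) (0, 1)) u := by
  have hd : DifferentiableAt ℝ (fun p : ℝ × ℝ => g p.1 p.2) (y, u) :=
    (hg.contDiffAt (hV.mem_nhds h)).differentiableAt (by simp)
  have h1 : HasFDerivAt (fun t : ℝ => ((y, t) : ℝ × ℝ))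
      (ContinuousLinearMap.inr ℝ ℝ ℝ) u := hasFDerivAt_prodMk_right y u
  have h2 := (hd.hasFDerivAt.comp u h1).hasDerivAt
  simpa [Function.comp_def] using h2

private lemma hasDerivAt_pd2 {V : Set (ℝ × ℝ)} (hV : IsOpen V) {g : ℝ → ℝ → ℝ}
    (hg : ContDiffOn ℝ (⊤ : ℕ∞) (fun p : ℝ × ℝ => g p.1 p.2) V) {y u : ℝ}
    (h : (y, u) ∈ V) :
    HasDerivAt (fun t => g y t) (pd2 g y u) u := by
  have H := hasDerivAt_snd hV hg h
  have : pd2 g y u = fderiv ℝ (fun p : ℝ × ℝ => g p.1 p.2) (y, u) (0, 1) := H.deriv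
  rw [this]; exact H

private lemma contDiffOn_pd2 {V : Set (ℝ × ℝ)} (hV : IsOpen V) {g : ℝ → ℝ → ℝ}
    (hg : ContDiffOn ℝ (⊤ : ℕ∞) (fun p : ℝ × ℝ => g p.1 p.2) V) :
    ContDiffOn ℝ (⊤ : ℕ∞) (fun p : ℝ × ℝ => pd2 g p.1 p.2) V := by
  have hF : ContDiffOn ℝ (⊤ : ℕ∞) (fun p : ℝ × ℝ =>
      fderiv ℝ (fun q : ℝ × ℝ => g q.1 q.2) p (0, 1)) V :=
    (hg.fderiv_of_isOpen hV (mod_cast le_top)).clm_apply contDiffOn_const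
  exact hF.congr (fun p hp => (hasDerivAt_snd hV hg (by simpa using hp)).deriv)

private lemma contDiffOn_pd1 {V : Set (ℝ × ℝ)} (hV : IsOpen V) {g : ℝ → ℝ → ℝ}
    (hg : ContDiffOn ℝ (⊤ : ℕ∞) (fun p : ℝ × ℝ => g p.1 p.2) V) :
    ContDiffOn ℝ (⊤ : ℕ∞) (fun p : ℝ × ℝ => pd1 g p.1 p.2) V := by
  have key : ∀ p ∈ V, HasDerivAt (fun t => g t p.2)
      (fderiv ℝ (fun q : ℝ × ℝ => g q.1 q.2) p (1, 0)) p.1 := by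
    intro p hp
    have hd : DifferentiableAt ℝ (fun q : ℝ × ℝ => g q.1 q.2) p :=
      (hg.contDiffAt (hV.mem_nhds hp)).differentiableAt (by simp)
    have h1 : HasFDerivAt (fun t : ℝ => ((t, p.2) : ℝ × ℝ))
        (ContinuousLinearMap.inl ℝ ℝ ℝ) p.1 := hasFDerivAt_prodMk_left p.1 p.2
    have h2 := (hd.hasFDerivAt.comp p.1 h1).hasDerivAt
    simpa [Function.comp_def] using h2
  have hF : ContDiffOn ℝ (⊤ : ℕ∞) (fun p : ℝ × ℝ =>
      fderiv ℝ (fun q : ℝ × ℝ => g q.1 q.2) p (1, 0)) V :=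
    (hg.fderiv_of_isOpen hV (mod_cast le_top)).clm_apply contDiffOn_const
  exact hF.congr (fun p hp => (key p hp).deriv)

/-- The syzygy `∇₂(J33) = 2·J33 − J22·J33 + J44` on an open set where `f`, `f_y` and `f_u`
are nowhere zero. -/
theorem nabla2_J33 (V : Set (ℝ × ℝ)) (hV : IsOpen V) (f : ℝ → ℝ → ℝ)
    (hf : ContDiffOn ℝ (⊤ : ℕ∞) (fun p : ℝ × ℝ => f p.1 p.2) V)
    (hf0 : ∀ y u : ℝ, (y, u) ∈ V → f y u ≠ 0)
    (hfy : ∀ y u : ℝ, (y, u) ∈ V → pd1 f y u ≠ 0)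
    (hfu : ∀ y u : ℝ, (y, u) ∈ V → pd2 f y u ≠ 0) :
    ∀ y u : ℝ, (y, u) ∈ V →
      nab2 f (J33 f) y u = 2 * J33 f y u - J22 f y u * J33 f y u + J44 f y u := by
  intro y u h
  have ha0 := hf0 y u h
  have hb := hfy y u h
  have ha1 := hfu y u h
  have hp1 := contDiffOn_pd1 hV hf
  have hp2 := contDiffOn_pd2 hV hf
  have hp21 := contDiffOn_pd2 hV hp1
  have hp22 := contDiffOn_pd2 hV hp2
  have hp221 := contDiffOn_pd2 hV hp21
  have hA0 : HasDerivAt (fun t => f y t) (pd2 f y u) u := hasDerivAt_pd2 hV hf h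
  have hB : HasDerivAt (fun t => pd1 f y t) (pd2 (pd1 f) y u) u := hasDerivAt_pd2 hV hp1 h
  have hA1 : HasDerivAt (fun t => pd2 f y t) (pd2 (pd2 f) y u) u := hasDerivAt_pd2 hV hp2 h
  have hC : HasDerivAt (fun t => pd2 (pd1 f) y t) (pd2 (pd2 (pd1 f)) y u) u :=
    hasDerivAt_pd2 hV hp21 h
  have hA2 : HasDerivAt (fun t => pd2 (pd2 f) y t) (pd2 (pd2 (pd2 f)) y u) u :=
    hasDerivAt_pd2 hV hp22 h
  have hD : HasDerivAt (fun t => pd2 (pd2 (pd1 f)) y t) (pd2 (pd2 (pd2 (pd1 f))) y u) u :=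
    hasDerivAt_pd2 hV hp221 h
  have hT1 := ((hA0.pow 2).mul hD).div ((hA1.pow 2).mul hB)
    (mul_ne_zero (pow_ne_zero 2 ha1) hb)
  have hT2a := (hA0.mul hC).div (hB.mul hA1) (mul_ne_zero hb ha1)
  have hT2b := (hA0.mul hA2).div (hA1.pow 2) (pow_ne_zero 2 ha1)
  have hJ : HasDerivAt (fun t => J33 f y t) _ u := hT1.sub (hT2a.mul hT2b)
  have e1 : nab2 f (J33 f) y u = f y u / pd2 f y u * deriv (fun t => J33 f y t) u := rfl
  rw [e1, hJ.deriv]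
  simp only [J33, J22, J44, Pi.pow_apply, Pi.mul_apply, Pi.div_apply, Nat.reduceSub, pow_one]
  field_simp
  ring
end
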